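/- arXiv:1408.2786 — 2 statements merged into one kernel-verified Lean document; each statement's English description precedes it below -/
import Mathlib

section
/- Recursion for the closed-form polynomials t_A (Proposition 3.2): for a finite set A of positive integers define t_A = 1 if |A| = 1, and t_A = x_{m}·y_{M,M}·∏_{i ∈ A∖{m,M}}( y_{i,i}·∑_{j∈A, j≤i} x_j + x_i·∑_{j∈A, j>i} y_{i,j} ) if |A| ≥ 2, where m = min(A), M = max(A). Then for |A| ≥ 2 and any fixed a ∈ A∖{m}: t_A = ∑ over pairs (B,C) with B ⊔ C = A, m ∈ C, a ∈ B, of x_m·(∑_{j∈B} y_{min(B),j})·t_B·t_C. -/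
/-- The minimum of a finite set of naturals (`0` for the empty set). -/
def fmin (B : Finset ℕ) : ℕ := WithTop.untopD 0 B.min

/-- The maximum of a finite set of naturals (`0` for the empty set). -/
def fmax (B : Finset ℕ) : ℕ := WithBot.unbotD 0 B.max

/-- The closed-form polynomial `t_A`: `t_A = 1` if `|A| ≤ 1`, and otherwise
`t_A = x_m y_{M,M} ∏_{i ∈ A∖{m,M}}(y_{i,i} ∑_{j∈A, j≤i} x_j + x_i ∑_{j∈A, j>i} y_{i,j})`
with `m = min A`, `M = max A`. -/
noncomputable def tA {R : Type*} [CommRing R] (x : ℕ → R) (y : ℕ → ℕ → R) (A : Finset ℕ) : R :=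
  if 2 ≤ A.card then
    x (fmin A) * y (fmax A) (fmax A) *
      ∏ i ∈ A.filter (fun i => i ≠ fmin A ∧ i ≠ fmax A),
        (y i i * ∑ j ∈ A.filter (fun j => j ≤ i), x j
          + x i * ∑ j ∈ A.filter (fun j => i < j), y i j)
  else 1

open Finset

set_option maxHeartbeats 1000000

namespace TARec

variable {R : Type*} [CommRing R]

noncomputable section
open scoped Classical

variable (x : ℕ → R) (y : ℕ → ℕ → R)

def w (i j : ℕ) : R := if j ≤ i then y i i * x j else x i * y i j

def fS (S : Finset ℕ) (i : ℕ) : R := ∑ j ∈ S, w x y i j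

def phi (V Rt : Finset ℕ) : R := ∏ i ∈ V \ Rt, fS x y V i

def XX (S : Finset ℕ) : R := ∑ j ∈ S, x j

def funs (s V : Finset ℕ) : Finset (ℕ → ℕ) :=
  (s.pi fun _ => V).image (fun p i => if h : i ∈ s then p i h else i)

def wt (s : Finset ℕ) (g : ℕ → ℕ) : R := ∏ i ∈ s, w x y i (g i)

def reaches (g : ℕ → ℕ) (i r : ℕ) : Prop := ∃ n, g^[n] i = r

def tree (D : Finset ℕ) (r : ℕ) : R :=
  ∑ g ∈ (funs (D.erase r) D).filter (fun g => ∀ i ∈ D, reaches g i r),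
    wt x y (D.erase r) g

variable {x y}

lemma mem_funs {s V : Finset ℕ} {g : ℕ → ℕ} :
    g ∈ funs s V ↔ (∀ i ∈ s, g i ∈ V) ∧ ∀ i ∉ s, g i = i := by
  constructor
  · rintro hg
    obtain ⟨p, hp, rfl⟩ := Finset.mem_image.1 hg
    constructor
    · intro i hi
      simp only [dif_pos hi]
      exact Finset.mem_pi.1 hp i hi
    · intro i hi; simp only [dif_neg hi]
  · rintro ⟨h1, h2⟩
    refine Finset.mem_image.2 ⟨fun i _ => g i, ?_, ?_⟩
    · exact Finset.mem_pi.2 fun i hi => h1 i hi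
    · funext i
      by_cases hi : i ∈ s
      · exact dif_pos hi
      · rw [dif_neg hi, h2 i hi]

lemma expand (s V : Finset ℕ) :
    ∏ i ∈ s, fS x y V i = ∑ g ∈ funs s V, wt x y s g := by
  unfold fS funs wt
  rw [Finset.prod_sum, Finset.sum_image]
  · apply Finset.sum_congr rfl
    intro p hp
    rw [← Finset.prod_attach s (fun i => w x y i (if h : i ∈ s then p i h else i))]
    apply Finset.prod_congr rfl
    intro a _
    rw [dif_pos a.2]
  · intro p hp q hq hpq
    funext i hi
    have := congrFun hpq i
    simpa [dif_pos hi] using this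

lemma reaches_of_invariant {g g' : ℕ → ℕ} {r : ℕ} {P : ℕ → Prop}
    (hP : ∀ j, P j → j ≠ r → (g' j = g j ∧ P (g j))) :
    ∀ n i, P i → g^[n] i = r → ∃ m, g'^[m] i = r := by
  intro n
  induction n with
  | zero => intro i _ h; exact ⟨0, h⟩
  | succ k ih =>
    intro i hPi h
    by_cases hir : i = r
    · exact ⟨0, hir⟩
    · obtain ⟨he, hPg⟩ := hP i hPi hir
      rw [Function.iterate_succ_apply] at h
      obtain ⟨m, hm⟩ := ih (g i) hPg h
      exact ⟨m + 1, by rw [Function.iterate_succ_apply, he, hm]⟩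

lemma invariant_iterate {g : ℕ → ℕ} {P : ℕ → Prop} (hP : ∀ j, P j → P (g j)) :
    ∀ (n : ℕ) (i : ℕ), P i → P (g^[n] i) := by
  intro n
  induction n with
  | zero => intro i h; exact h
  | succ k ih =>
    intro i h
    rw [Function.iterate_succ_apply]
    exact ih _ (hP i h)

lemma not_reaches_of_invariant {g : ℕ → ℕ} {r : ℕ} {P : ℕ → Prop}
    (hP : ∀ j, P j → P (g j)) (hPr : ∀ j, P j → j ≠ r) {i : ℕ} (hi : P i) :
    ¬ reaches g i r := by
  rintro ⟨n, hn⟩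
  exact hPr _ (invariant_iterate hP n i hi) hn

lemma reaches_step {g : ℕ → ℕ} {i r : ℕ} (hir : i ≠ r) (h : reaches g i r) :
    reaches g (g i) r := by
  obtain ⟨n, hn⟩ := h
  cases n with
  | zero => exact absurd hn hir
  | succ k =>
    rw [Function.iterate_succ_apply] at hn
    exact ⟨k, hn⟩

lemma reaches_of_step {g : ℕ → ℕ} {i r : ℕ} (h : reaches g (g i) r) :
    reaches g i r := by
  obtain ⟨n, hn⟩ := h
  exact ⟨n + 1, by rw [Function.iterate_succ_apply]; exact hn⟩

/-- The tree-splitting lemma (TS). -/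
lemma TS {V Rt : Finset ℕ} {z : ℕ} (hz : z ∈ V) (hzR : z ∉ Rt) (hRV : Rt ⊆ V) :
    phi x y V (insert z Rt) = ∑ D0 ∈ (V \ insert z Rt).powerset,
      tree x y (insert z D0) z * phi x y (V \ insert z D0) Rt := by
  set s : Finset ℕ := V \ insert z Rt with hs
  have hzs : z ∉ s := by simp [hs]
  have hsV : s ⊆ V := sdiff_subset
  -- expand LHS
  rw [phi, expand]
  -- fiberwise
  have hmaps : ∀ g ∈ funs s V, s.filter (fun i => reaches g i z) ∈ s.powerset :=
    fun g _ => Finset.mem_powerset.2 (Finset.filter_subset _ _)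
  rw [← Finset.sum_fiberwise_of_maps_to hmaps (wt x y s)]
  apply Finset.sum_congr rfl
  intro D0 hD0
  rw [Finset.mem_powerset] at hD0
  have hzD0 : z ∉ D0 := fun h => hzs (hD0 h)
  set D : Finset ℕ := insert z D0 with hD
  have hDV : D ⊆ V := Finset.insert_subset hz (hD0.trans hsV)
  have hDe : D.erase z = D0 := Finset.erase_insert hzD0
  have hs2 : (V \ D) \ Rt = s \ D0 := by
    ext i
    simp only [hs, hD, Finset.mem_sdiff, Finset.mem_insert, not_or]
    tauto
  -- expand RHS factors
  rw [tree, hDe, phi, hs2, expand]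
  rw [Finset.sum_mul_sum]
  -- reindex
  set T1 := (funs D0 D).filter (fun g => ∀ i ∈ D, reaches g i z) with hT1
  rw [← Finset.sum_product' T1 (funs (s \ D0) (V \ D))
    (fun g1 g2 => wt x y D0 g1 * wt x y (s \ D0) g2)]
  apply Finset.sum_nbij' (i := fun g => (fun i => if i ∈ D0 then g i else i,
      fun i => if i ∈ s \ D0 then g i else i))
    (j := fun p => fun i => if i ∈ D0 then p.1 i else p.2 i)
  · -- forward membership
    intro g hg
    rw [Finset.mem_filter] at hg
    obtain ⟨hgf, hfib⟩ := hg
    rw [mem_funs] at hgf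
    obtain ⟨hg1, hg2⟩ := hgf
    have hmemD0 : ∀ i, i ∈ D0 ↔ i ∈ s ∧ reaches g i z := by
      intro i; rw [← hfib, Finset.mem_filter]
    have hgRt : ∀ j, j ∈ Rt → g j = j := by
      intro j hj
      exact hg2 j (by simp [hs, hj])
    -- C1 : g maps D0 into D
    have C1 : ∀ i ∈ D0, g i ∈ D := by
      intro i hi
      obtain ⟨his, hir⟩ := (hmemD0 i).1 hi
      have hiz : i ≠ z := fun h => hzs (h ▸ his)
      have hgr : reaches g (g i) z := reaches_step hiz hir
      by_cases hgiz : g i = z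
      · rw [hD, hgiz]; exact Finset.mem_insert_self _ _
      · have hgiV : g i ∈ V := hg1 i his
        have hgiRt : g i ∉ Rt := by
          intro hRtm
          exact not_reaches_of_invariant (g := g) (P := fun j => j = g i)
            (fun j hj => by rw [hj]; exact hgRt _ hRtm) (fun j hj => hj ▸ hgiz) rfl hgr
        have : g i ∈ D0 := (hmemD0 (g i)).2 ⟨by simp [hs, hgiV, hgiz, hgiRt], hgr⟩
        exact Finset.mem_insert_of_mem this
    refine Finset.mem_product.2 ⟨?_, ?_⟩
    · rw [hT1, Finset.mem_filter, mem_funs]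
      refine ⟨⟨fun i hi => by
          show (if i ∈ D0 then g i else i) ∈ D
          rw [if_pos hi]; exact C1 i hi,
        fun i hi => by
          show (if i ∈ D0 then g i else i) = i
          rw [if_neg hi]⟩, ?_⟩
      intro i hi
      rw [hD, Finset.mem_insert] at hi
      rcases hi with rfl | hi
      · exact ⟨0, rfl⟩
      · obtain ⟨his, hn⟩ := (hmemD0 i).1 hi
        obtain ⟨n, hn⟩ := hn
        exact reaches_of_invariant (P := fun j => j ∈ D)
          (fun j hj hjz => by
            have hjD0 : j ∈ D0 := by
              rw [hD, Finset.mem_insert] at hj; tauto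
            exact ⟨if_pos hjD0, C1 j hjD0⟩) n i (Finset.mem_insert_of_mem hi) hn
    · rw [mem_funs]
      refine ⟨fun i hi => ?_, fun i hi => by
        show (if i ∈ s \ D0 then g i else i) = i
        rw [if_neg hi]⟩
      show (if i ∈ s \ D0 then g i else i) ∈ V \ D
      rw [if_pos hi]
      rw [Finset.mem_sdiff] at hi
      obtain ⟨his, hiD0⟩ := hi
      have hgiV : g i ∈ V := hg1 i his
      have hgiD : g i ∉ D := by
        rw [hD, Finset.mem_insert]
        push_neg
        constructor
        · intro hgiz
          exact hiD0 ((hmemD0 i).2 ⟨his, ⟨1, by simp [hgiz]⟩⟩)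
        · intro hgiD0
          have := (hmemD0 (g i)).1 hgiD0
          exact hiD0 ((hmemD0 i).2 ⟨his, reaches_of_step this.2⟩)
      exact Finset.mem_sdiff.2 ⟨hgiV, hgiD⟩
  · -- backward membership
    intro p hp
    rw [Finset.mem_product] at hp
    obtain ⟨hp1, hp2⟩ := hp
    rw [hT1, Finset.mem_filter, mem_funs] at hp1
    obtain ⟨⟨h11, h12⟩, htree⟩ := hp1
    rw [mem_funs] at hp2
    obtain ⟨h21, h22⟩ := hp2
    rw [Finset.mem_filter, mem_funs]
    have hglue : ∀ i, i ∉ D → (if i ∈ D0 then p.1 i else p.2 i) ∉ D := by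
      intro i hi
      have hiD0 : i ∉ D0 := fun h => hi (Finset.mem_insert_of_mem h)
      rw [if_neg hiD0]
      by_cases his : i ∈ s \ D0
      · exact fun h => (Finset.mem_sdiff.1 (h21 i his)).2 h
      · rw [h22 i his]; exact hi
    refine ⟨⟨fun i hi => ?_, fun i hi => ?_⟩, ?_⟩
    · show (if i ∈ D0 then p.1 i else p.2 i) ∈ V
      by_cases hiD0 : i ∈ D0
      · rw [if_pos hiD0]; exact hDV (h11 i hiD0)
      · rw [if_neg hiD0]
        exact (Finset.mem_sdiff.1 (h21 i (Finset.mem_sdiff.2 ⟨hi, hiD0⟩))).1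
    · show (if i ∈ D0 then p.1 i else p.2 i) = i
      have hiD0 : i ∉ D0 := fun h => hi (hD0 h)
      rw [if_neg hiD0]
      exact h22 i (fun h => hi (Finset.mem_sdiff.1 h).1)
    · -- fiber condition
      apply Finset.Subset.antisymm
      · intro i hi
        rw [Finset.mem_filter] at hi
        obtain ⟨his, hr⟩ := hi
        by_contra hiD0
        have hiD : i ∉ D := by
          rw [hD, Finset.mem_insert]
          push_neg
          exact ⟨fun h => hzs (h ▸ his), hiD0⟩
        exact not_reaches_of_invariant (P := fun j => j ∉ D) hglue
          (fun j hj => fun h => hj (h ▸ Finset.mem_insert_self z D0)) hiD hr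
      · intro i hi
        rw [Finset.mem_filter]
        refine ⟨hD0 hi, ?_⟩
        obtain ⟨n, hn⟩ := htree i (Finset.mem_insert_of_mem hi)
        exact reaches_of_invariant (P := fun j => j ∈ D)
          (fun j hj hjz => by
            have hjD0 : j ∈ D0 := by
              rw [hD, Finset.mem_insert] at hj; tauto
            exact ⟨if_pos hjD0, h11 j hjD0⟩) n i (Finset.mem_insert_of_mem hi) hn
  · -- left inverse
    intro g hg
    dsimp only
    rw [Finset.mem_filter, mem_funs] at hg
    funext i
    by_cases hiD0 : i ∈ D0
    · simp only [if_pos hiD0]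
    · simp only [if_neg hiD0]
      by_cases his : i ∈ s \ D0
      · rw [if_pos his]
      · rw [if_neg his]
        exact (hg.1.2 i (fun h => his (Finset.mem_sdiff.2 ⟨h, hiD0⟩))).symm
  · -- right inverse
    intro p hp
    dsimp only
    rw [Finset.mem_product] at hp
    obtain ⟨hp1, hp2⟩ := hp
    rw [hT1, Finset.mem_filter, mem_funs] at hp1
    rw [mem_funs] at hp2
    have e1 : (fun i => if i ∈ D0 then (if i ∈ D0 then p.1 i else p.2 i) else i) = p.1 := by
      funext i
      by_cases hiD0 : i ∈ D0
      · simp only [if_pos hiD0]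
      · simp only [if_neg hiD0]
        exact (hp1.1.2 i hiD0).symm
    have e2 : (fun i => if i ∈ s \ D0 then (if i ∈ D0 then p.1 i else p.2 i) else i) = p.2 := by
      funext i
      by_cases his : i ∈ s \ D0
      · simp only [if_pos his, if_neg (Finset.mem_sdiff.1 his).2]
      · simp only [if_neg his]
        exact (hp2.2 i his).symm
    exact Prod.ext e1 e2
  · -- weights
    intro g hg
    dsimp only
    rw [Finset.mem_filter, mem_funs] at hg
    have : wt x y s g = wt x y D0 g * wt x y (s \ D0) g := by
      rw [wt, wt, wt, ← Finset.prod_sdiff hD0, mul_comm]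
    rw [this]
    congr 1
    · rw [wt, wt]
      apply Finset.prod_congr rfl
      intro i hi
      rw [if_pos hi]
    · rw [wt, wt]
      apply Finset.prod_congr rfl
      intro i hi
      rw [if_pos hi]

/-- Swap order of summation over pairs of disjoint subsets of `U`. -/
lemma SWAP (U : Finset ℕ) (F : Finset ℕ → Finset ℕ → R) :
    ∑ D ∈ U.powerset, ∑ C ∈ (U \ D).powerset, F D C
      = ∑ C ∈ U.powerset, ∑ D ∈ (U \ C).powerset, F D C := by
  apply Finset.sum_comm'
  intro D C
  simp only [Finset.mem_powerset, Finset.subset_sdiff]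
  constructor
  · rintro ⟨h1, h2, h3⟩
    exact ⟨⟨h1, h3.symm⟩, h2⟩
  · rintro ⟨⟨h1, h3⟩, h2⟩
    exact ⟨h1, h2, h3.symm⟩

/-- Reindex sums over pairs `Dd ⊆ B ⊆ U` as pairs of disjoint sets. -/
lemma PAIR (U : Finset ℕ) (F : Finset ℕ → Finset ℕ → R) :
    ∑ B ∈ U.powerset, ∑ Dd ∈ B.powerset, F B Dd
      = ∑ Dd ∈ U.powerset, ∑ C ∈ (U \ Dd).powerset, F (Dd ∪ C) Dd := by
  rw [Finset.sum_comm' (s' := fun Dd => (U.powerset).filter (fun B => Dd ⊆ B))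
    (t' := U.powerset) (f := F)]
  · apply Finset.sum_congr rfl
    intro Dd hDd
    rw [Finset.mem_powerset] at hDd
    apply Finset.sum_nbij' (i := fun B => B \ Dd) (j := fun C => Dd ∪ C)
    · intro B hB
      rw [Finset.mem_filter, Finset.mem_powerset] at hB
      exact Finset.mem_powerset.2 (Finset.sdiff_subset_sdiff hB.1 (le_refl _))
    · intro C hC
      rw [Finset.mem_powerset, Finset.subset_sdiff] at hC
      rw [Finset.mem_filter, Finset.mem_powerset]
      exact ⟨Finset.union_subset hDd hC.1, Finset.subset_union_left⟩
    · intro B hB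
      rw [Finset.mem_filter] at hB
      exact Finset.union_sdiff_of_subset hB.2
    · intro C hC
      rw [Finset.mem_powerset, Finset.subset_sdiff] at hC
      exact Finset.union_sdiff_cancel_left hC.2.symm
    · intro B hB
      rw [Finset.mem_filter] at hB
      rw [Finset.union_sdiff_of_subset hB.2]
  · intro B Dd
    simp only [Finset.mem_powerset, Finset.mem_filter, Finset.mem_powerset]
    constructor
    · rintro ⟨h1, h2⟩
      exact ⟨⟨h1, h2⟩, h2.trans h1⟩
    · rintro ⟨⟨h1, h2⟩, h3⟩
      exact ⟨h1, h2⟩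

/-- Two-block sums with marked roots. -/
def SS (x : ℕ → R) (y : ℕ → ℕ → R) (U E Z0 : Finset ℕ) : R :=
  ∑ B0 ∈ ((U \ E) \ Z0).powerset,
    phi x y (E ∪ B0) E * phi x y (U \ (E ∪ B0)) Z0

lemma Dmove {U E Z0 : Finset ℕ} {z : ℕ} (hzU : z ∈ U) (hzE : z ∉ E) (hzZ : z ∉ Z0)
    (hEU : E ⊆ U) (hZU : Z0 ⊆ U) (hEZ : Disjoint E Z0) :
    SS x y U (insert z E) Z0 = SS x y U E (insert z Z0) := by
  classical
  set W : Finset ℕ := (U \ insert z E) \ Z0 with hWdef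
  have hWE : ∀ i ∈ W, i ∉ E := by
    intro i hi
    simp only [hWdef, Finset.mem_sdiff, Finset.mem_insert, not_or] at hi
    exact hi.1.2.2
  have hWz : z ∉ W := by
    simp [hWdef]
  have hWZ : ∀ i ∈ W, i ∉ Z0 := by
    intro i hi
    simp only [hWdef, Finset.mem_sdiff] at hi
    exact hi.2
  have hWU : W ⊆ U := by
    intro i hi
    simp only [hWdef, Finset.mem_sdiff] at hi
    exact hi.1.1
  have hW2 : (U \ E) \ insert z Z0 = W := by
    ext i
    simp only [hWdef, Finset.mem_sdiff, Finset.mem_insert, not_or]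
    tauto
  -- LHS
  have hL : SS x y U (insert z E) Z0
      = ∑ B0 ∈ W.powerset, ∑ D0 ∈ B0.powerset,
          tree x y (insert z D0) z *
            (phi x y (E ∪ (B0 \ D0)) E * phi x y (U \ insert z (E ∪ B0)) Z0) := by
    rw [SS]
    apply Finset.sum_congr rfl
    intro B0 hB0
    rw [Finset.mem_powerset] at hB0
    have hzB : z ∉ B0 := fun h => hWz (hB0 h)
    have hBE : ∀ i ∈ B0, i ∉ E := fun i hi => hWE i (hB0 hi)
    have I1 : insert z E ∪ B0 = insert z (E ∪ B0) := Finset.insert_union z E B0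
    have I2 : insert z (E ∪ B0) \ insert z E = B0 := by
      ext i
      simp only [Finset.mem_sdiff, Finset.mem_insert, Finset.mem_union, not_or]
      have h1 := hBE i
      have h2 : i ∈ B0 → i ≠ z := fun h hz => hzB (hz ▸ h)
      tauto
    rw [I1, TS (Finset.mem_insert_self z (E ∪ B0)) hzE
      (Finset.subset_union_left.trans (Finset.subset_insert _ _)), I2]
    rw [Finset.sum_mul]
    apply Finset.sum_congr rfl
    intro D0 hD0
    rw [Finset.mem_powerset] at hD0
    have I3 : insert z (E ∪ B0) \ insert z D0 = E ∪ (B0 \ D0) := by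
      ext i
      simp only [Finset.mem_sdiff, Finset.mem_insert, Finset.mem_union, not_or]
      have h1 := hBE i
      have h2 : i ∈ B0 → i ≠ z := fun h hz => hzB (hz ▸ h)
      have h3 : i ∈ E → i ≠ z := fun h hz => hzE (hz ▸ h)
      have h4 : i ∈ E → i ∉ D0 := fun h hd => hBE i (hD0 hd) h
      have h5 : i ∈ D0 → i ∈ B0 := fun h => hD0 h
      tauto
    rw [I3]
    ring
  -- RHS
  have hR : SS x y U E (insert z Z0)
      = ∑ B0 ∈ W.powerset, ∑ D0 ∈ (W \ B0).powerset,
          tree x y (insert z D0) z *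
            (phi x y (E ∪ B0) E * phi x y (U \ insert z (E ∪ (B0 ∪ D0))) Z0) := by
    rw [SS, hW2]
    apply Finset.sum_congr rfl
    intro B0 hB0
    rw [Finset.mem_powerset] at hB0
    have hzB : z ∉ B0 := fun h => hWz (hB0 h)
    have hBE : ∀ i ∈ B0, i ∉ E := fun i hi => hWE i (hB0 hi)
    have hBZ : ∀ i ∈ B0, i ∉ Z0 := fun i hi => hWZ i (hB0 hi)
    have hzV : z ∈ U \ (E ∪ B0) := by
      simp only [Finset.mem_sdiff, Finset.mem_union, not_or]
      exact ⟨hzU, hzE, hzB⟩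
    have hZV : Z0 ⊆ U \ (E ∪ B0) := by
      intro i hi
      simp only [Finset.mem_sdiff, Finset.mem_union, not_or]
      exact ⟨hZU hi, fun h => Finset.disjoint_right.1 hEZ hi h,
        fun h => hBZ i h hi⟩
    have I4 : (U \ (E ∪ B0)) \ insert z Z0 = W \ B0 := by
      ext i
      simp only [hWdef, Finset.mem_sdiff, Finset.mem_insert, Finset.mem_union, not_or]
      tauto
    rw [TS hzV hzZ hZV, I4, Finset.mul_sum]
    apply Finset.sum_congr rfl
    intro D0 hD0
    rw [Finset.mem_powerset, Finset.subset_sdiff] at hD0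
    have I5 : (U \ (E ∪ B0)) \ insert z D0 = U \ insert z (E ∪ (B0 ∪ D0)) := by
      ext i
      simp only [Finset.mem_sdiff, Finset.mem_insert, Finset.mem_union, not_or]
      tauto
    rw [I5]
    ring
  rw [SWAP] at hR
  rw [hL, hR, PAIR]
  apply Finset.sum_congr rfl
  intro D0 hD0
  rw [Finset.mem_powerset] at hD0
  apply Finset.sum_congr rfl
  intro C hC
  rw [Finset.mem_powerset, Finset.subset_sdiff] at hC
  have I6 : (D0 ∪ C) \ D0 = C := Finset.union_sdiff_cancel_left hC.2.symm
  have I7 : E ∪ (D0 ∪ C) = E ∪ (C ∪ D0) := by rw [Finset.union_comm D0 C]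
  rw [I6, I7]

lemma Dfull {U : Finset ℕ} : ∀ (E : Finset ℕ), ∀ {Z0 : Finset ℕ},
    E ⊆ U → Z0 ⊆ U → Disjoint E Z0 →
    SS x y U E Z0 = SS x y U ∅ (E ∪ Z0) := by
  intro E
  induction E using Finset.induction_on with
  | empty => intro Z0 _ _ _; rw [Finset.empty_union]
  | @insert z E' hzE' ih =>
    intro Z0 hEU hZU hEZ
    have hzU : z ∈ U := hEU (Finset.mem_insert_self _ _)
    have hzZ : z ∉ Z0 := Finset.disjoint_left.1 hEZ (Finset.mem_insert_self _ _)
    have hE'U : E' ⊆ U := (Finset.subset_insert _ _).trans hEU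
    have hE'Z : Disjoint E' (insert z Z0) := by
      rw [Finset.disjoint_insert_right]
      exact ⟨hzE', Finset.disjoint_insert_left.1 hEZ |>.2⟩
    rw [Dmove hzU hzE' hzZ hE'U hZU (Finset.disjoint_insert_left.1 hEZ).2,
      ih hE'U (Finset.insert_subset hzU hZU) hE'Z]
    congr 1
    rw [Finset.union_insert, Finset.insert_union]

-- fmin / fmax bridges (definitions stated in the target file; here placeholders
-- will be provided by the final assembled file)

lemma fmin_eq {V : Finset ℕ} (h : V.Nonempty) : fmin V = V.min' h := by
  rw [fmin, ← Finset.coe_min' h, WithTop.untopD_coe]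

lemma fmax_eq {V : Finset ℕ} (h : V.Nonempty) : fmax V = V.max' h := by
  rw [fmax, ← Finset.coe_max' h, WithBot.unbotD_coe]

lemma fmin_mem {V : Finset ℕ} (h : V.Nonempty) : fmin V ∈ V := by
  rw [fmin_eq h]; exact V.min'_mem h

lemma fmax_mem {V : Finset ℕ} (h : V.Nonempty) : fmax V ∈ V := by
  rw [fmax_eq h]; exact V.max'_mem h

lemma fmin_le {V : Finset ℕ} {i : ℕ} (hi : i ∈ V) : fmin V ≤ i := by
  rw [fmin_eq ⟨i, hi⟩]; exact V.min'_le i hi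

lemma le_fmax {V : Finset ℕ} {i : ℕ} (hi : i ∈ V) : i ≤ fmax V := by
  rw [fmax_eq ⟨i, hi⟩]; exact V.le_max' i hi

lemma fmin_eq_of {V : Finset ℕ} {m : ℕ} (hm : m ∈ V) (hlb : ∀ i ∈ V, m ≤ i) :
    fmin V = m :=
  le_antisymm (fmin_le hm) (hlb _ (fmin_mem ⟨m, hm⟩))

lemma fS_filter {A : Finset ℕ} {i : ℕ} :
    fS x y A i = y i i * ∑ j ∈ A.filter (fun j => j ≤ i), x j
      + x i * ∑ j ∈ A.filter (fun j => i < j), y i j := by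
  rw [fS, ← Finset.sum_filter_add_sum_filter_not A (fun j => j ≤ i)]
  congr 1
  · rw [Finset.mul_sum]
    apply Finset.sum_congr rfl
    intro j hj
    rw [Finset.mem_filter] at hj
    rw [w, if_pos hj.2]
  · rw [Finset.mul_sum]
    have : A.filter (fun j => i < j) = A.filter (fun j => ¬ j ≤ i) := by
      apply Finset.filter_congr
      intro j _
      omega
    rw [← this]
    apply Finset.sum_congr rfl
    intro j hj
    rw [Finset.mem_filter] at hj
    rw [w, if_neg (Nat.not_le.2 hj.2)]

lemma tA_eq {A : Finset ℕ} (h2 : 2 ≤ A.card) :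
    tA x y A = x (fmin A) * y (fmax A) (fmax A)
      * ∏ i ∈ A \ {fmin A, fmax A}, fS x y A i := by
  rw [tA, if_pos h2]
  congr 1
  have hset : A.filter (fun i => i ≠ fmin A ∧ i ≠ fmax A) = A \ {fmin A, fmax A} := by
    ext i
    simp only [Finset.mem_filter, Finset.mem_sdiff, Finset.mem_insert,
      Finset.mem_singleton, not_or]
  rw [hset]
  apply Finset.prod_congr rfl
  intro i _
  rw [fS_filter]

lemma tA_one {A : Finset ℕ} (h : A.card < 2) : tA x y A = 1 := by
  rw [tA, if_neg (by omega)]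

lemma fS_fmax {V : Finset ℕ} (h : V.Nonempty) :
    fS x y V (fmax V) = y (fmax V) (fmax V) * XX x V := by
  rw [fS, XX, Finset.mul_sum]
  apply Finset.sum_congr rfl
  intro j hj
  rw [w, if_pos (le_fmax hj)]

lemma fS_fmin {V : Finset ℕ} (h : V.Nonempty) :
    fS x y V (fmin V) = x (fmin V) * ∑ j ∈ V, y (fmin V) j := by
  rw [fS, Finset.mul_sum]
  apply Finset.sum_congr rfl
  intro j hj
  rw [w]
  rcases Nat.lt_or_ge (fmin V) j with hlt | hge
  · rw [if_neg (Nat.not_le.2 hlt)]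
  · have hje : j = fmin V := le_antisymm hge (fmin_le hj)
    rw [hje, if_pos (le_refl (fmin V)), mul_comm]

/-- L0 : `X_V * t_V = x_{min V} * Φ(V, {min V})`. -/
lemma L0 {V : Finset ℕ} (h : V.Nonempty) :
    XX x V * tA x y V = x (fmin V) * phi x y V {fmin V} := by
  rcases Nat.lt_or_ge V.card 2 with h1 | h2
  · -- |V| = 1
    have : V.card = 1 := le_antisymm (by omega) (Finset.card_pos.2 h)
    obtain ⟨a, rfl⟩ := Finset.card_eq_one.1 this
    have hfa : fmin {a} = a := fmin_eq_of (Finset.mem_singleton_self a)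
      (fun i hi => le_of_eq (Finset.mem_singleton.1 hi).symm)
    rw [tA_one (by simp), hfa, XX, phi]
    simp
  · -- |V| ≥ 2
    have hmM : fmin V ≠ fmax V := by
      rw [fmin_eq h, fmax_eq h]
      exact ne_of_lt (Finset.min'_lt_max'_of_card V (by omega))
    have hMm : fmax V ∈ V \ {fmin V} := by
      rw [Finset.mem_sdiff, Finset.mem_singleton]
      exact ⟨fmax_mem h, fun hc => hmM hc.symm⟩
    have hset : (V \ {fmin V}).erase (fmax V) = V \ {fmin V, fmax V} := by
      ext i
      simp only [Finset.mem_erase, Finset.mem_sdiff, Finset.mem_insert,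
        Finset.mem_singleton, not_or]
      tauto
    rw [phi, ← Finset.mul_prod_erase _ _ hMm, hset, fS_fmax h, tA_eq h2]
    ring

/-- The statement `(◇)` for a nonempty finite set `V`. -/
def Dia (x : ℕ → R) (y : ℕ → ℕ → R) (V : Finset ℕ) : Prop :=
  phi x y V {fmin V} = ∑ B ∈ (V \ {fmin V}).powerset, phi x y B ∅ * tA x y (V \ B)

lemma G1 {n : ℕ} (hdia : ∀ W : Finset ℕ, W.Nonempty → W.card ≤ n → Dia x y W) :
    ∀ (Z V : Finset ℕ), V.Nonempty → V.card ≤ n → Z ⊆ V \ {fmin V} →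
    phi x y V ({fmin V} ∪ Z) = ∑ B0 ∈ ((V \ {fmin V}) \ Z).powerset,
      phi x y (Z ∪ B0) Z * tA x y (V \ (Z ∪ B0)) := by
  intro Z
  induction Z using Finset.induction_on with
  | empty =>
    intro V hV hn _
    simp only [Finset.union_empty, Finset.sdiff_empty, Finset.empty_union]
    exact hdia V hV hn
  | @insert z Z' hzZ' ih =>
    intro V hV hn hZV
    set m : ℕ := fmin V with hm
    have hmV : m ∈ V := fmin_mem hV
    have hzV : z ∈ V := (Finset.mem_sdiff.1 (hZV (Finset.mem_insert_self _ _))).1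
    have hzm : z ≠ m := by
      have := (Finset.mem_sdiff.1 (hZV (Finset.mem_insert_self _ _))).2
      simpa using this
    have hZ'V : Z' ⊆ V \ {m} := (Finset.subset_insert _ _).trans hZV
    have hZ'Vm : ∀ i ∈ Z', i ∈ V ∧ i ≠ m := by
      intro i hi
      have := Finset.mem_sdiff.1 (hZ'V hi)
      simpa using this
    set W : Finset ℕ := (V \ {m}) \ insert z Z' with hWdef
    have hWfact : ∀ i ∈ W, i ∈ V ∧ i ≠ m ∧ i ≠ z ∧ i ∉ Z' := by
      intro i hi
      simp only [hWdef, Finset.mem_sdiff, Finset.mem_insert, Finset.mem_singleton,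
        not_or] at hi
      tauto
    have hzW : z ∉ W := by simp [hWdef]
    -- LHS via TS
    have hRt : {m} ∪ Z' ⊆ V := Finset.union_subset (Finset.singleton_subset_iff.2 hmV)
      (hZ'V.trans (Finset.sdiff_subset))
    have hzRt : z ∉ {m} ∪ Z' := by
      simp only [Finset.mem_union, Finset.mem_singleton, not_or]
      exact ⟨hzm, hzZ'⟩
    have hIdx : V \ insert z ({m} ∪ Z') = W := by
      ext i
      simp only [hWdef, Finset.mem_sdiff, Finset.mem_insert, Finset.mem_union,
        Finset.mem_singleton, not_or]
      tauto
    have hL : phi x y V ({m} ∪ insert z Z')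
        = ∑ D0 ∈ W.powerset, ∑ B0 ∈ (W \ D0).powerset,
            tree x y (insert z D0) z *
              (phi x y (Z' ∪ B0) Z' * tA x y (V \ insert z (Z' ∪ (D0 ∪ B0)))) := by
      rw [Finset.union_insert, TS hzV hzRt hRt, hIdx]
      apply Finset.sum_congr rfl
      intro D0 hD0
      rw [Finset.mem_powerset] at hD0
      have hD0fact := fun i hi => hWfact i (hD0 hi)
      set V' : Finset ℕ := V \ insert z D0 with hV'def
      have hmV' : m ∈ V' := by
        simp only [hV'def, Finset.mem_sdiff, Finset.mem_insert, not_or]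
        exact ⟨hmV, fun h => hzm h.symm, fun h => (hD0fact m h).2.1 rfl⟩
      have hminV' : fmin V' = m := fmin_eq_of hmV'
        (fun i hi => fmin_le (Finset.mem_sdiff.1 hi).1)
      have hV'card : V'.card ≤ n := le_trans (Finset.card_le_card Finset.sdiff_subset) hn
      have hZ'V' : Z' ⊆ V' \ {fmin V'} := by
        rw [hminV']
        intro i hi
        obtain ⟨hiV, him⟩ := hZ'Vm i hi
        simp only [hV'def, Finset.mem_sdiff, Finset.mem_insert, Finset.mem_singleton,
          not_or]
        exact ⟨⟨hiV, fun h => hzZ' (h ▸ hi), fun h => (hD0fact i h).2.2.2 hi⟩, him⟩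
      have hI2 : (V' \ {m}) \ Z' = W \ D0 := by
        ext i
        simp only [hV'def, hWdef, Finset.mem_sdiff, Finset.mem_insert,
          Finset.mem_singleton, not_or]
        tauto
      rw [show ({m} ∪ Z' : Finset ℕ) = ({fmin V'} ∪ Z') by rw [hminV'],
        ih V' ⟨m, hmV'⟩ hV'card hZ'V', hminV', hI2, Finset.mul_sum]
      apply Finset.sum_congr rfl
      intro B0 hB0
      rw [Finset.mem_powerset, Finset.subset_sdiff] at hB0
      have hI3 : V' \ (Z' ∪ B0) = V \ insert z (Z' ∪ (D0 ∪ B0)) := by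
        ext i
        simp only [hV'def, Finset.mem_sdiff, Finset.mem_insert, Finset.mem_union, not_or]
        tauto
      rw [hI3]
    -- RHS via TS then PAIR
    have hR : ∑ B0 ∈ ((V \ {m}) \ insert z Z').powerset,
          phi x y (insert z Z' ∪ B0) (insert z Z') * tA x y (V \ (insert z Z' ∪ B0))
        = ∑ D0 ∈ W.powerset, ∑ C ∈ (W \ D0).powerset,
            tree x y (insert z D0) z *
              (phi x y (Z' ∪ C) Z' * tA x y (V \ insert z (Z' ∪ (D0 ∪ C)))) := by
      have hstep : ∀ B0 ∈ W.powerset,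
          phi x y (insert z Z' ∪ B0) (insert z Z') * tA x y (V \ (insert z Z' ∪ B0))
          = ∑ D0 ∈ B0.powerset, tree x y (insert z D0) z *
              (phi x y (Z' ∪ (B0 \ D0)) Z' * tA x y (V \ insert z (Z' ∪ B0))) := by
        intro B0 hB0
        rw [Finset.mem_powerset] at hB0
        have hB0fact := fun i hi => hWfact i (hB0 hi)
        have hzB0 : z ∉ B0 := fun h => hzW (hB0 h)
        have hI4 : insert z Z' ∪ B0 = insert z (Z' ∪ B0) := Finset.insert_union z Z' B0
        have hzV2 : z ∈ insert z (Z' ∪ B0) := Finset.mem_insert_self _ _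
        have hZ'V2 : Z' ⊆ insert z (Z' ∪ B0) :=
          Finset.subset_union_left.trans (Finset.subset_insert _ _)
        have hI5 : insert z (Z' ∪ B0) \ insert z Z' = B0 := by
          ext i
          simp only [Finset.mem_sdiff, Finset.mem_insert, Finset.mem_union, not_or]
          have h1 := fun h => (hB0fact i h).2.2.2
          have h2 : i ∈ B0 → i ≠ z := fun h => (hB0fact i h).2.2.1
          tauto
        rw [hI4, TS hzV2 hzZ' hZ'V2, hI5, Finset.sum_mul]
        apply Finset.sum_congr rfl
        intro D0 hD0
        rw [Finset.mem_powerset] at hD0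
        have hI6 : insert z (Z' ∪ B0) \ insert z D0 = Z' ∪ (B0 \ D0) := by
          ext i
          simp only [Finset.mem_sdiff, Finset.mem_insert, Finset.mem_union, not_or]
          have h1 := fun h => (hB0fact i h).2.2.2
          have h2 : i ∈ B0 → i ≠ z := fun h => (hB0fact i h).2.2.1
          have h3 : i ∈ Z' → i ≠ z := fun h hz => hzZ' (hz ▸ h)
          have h4 : i ∈ Z' → i ∉ D0 := fun h hd => (hB0fact i (hD0 hd)).2.2.2 h
          have h5 : i ∈ D0 → i ∈ B0 := fun h => hD0 h
          tauto
        rw [hI6]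
        ring
      rw [Finset.sum_congr rfl hstep, PAIR]
      apply Finset.sum_congr rfl
      intro D0 hD0
      rw [Finset.mem_powerset] at hD0
      apply Finset.sum_congr rfl
      intro C hC
      rw [Finset.mem_powerset, Finset.subset_sdiff] at hC
      rw [Finset.union_sdiff_cancel_left hC.2.symm]
    rw [hL, hR]

lemma fmax_eq_of {V : Finset ℕ} {M : ℕ} (hM : M ∈ V) (hub : ∀ i ∈ V, i ≤ M) :
    fmax V = M :=
  le_antisymm (hub _ (fmax_mem ⟨M, hM⟩)) (le_fmax hM)

lemma fS_top {V' : Finset ℕ} {c : ℕ} (hub : ∀ i ∈ V', i ≤ c) :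
    fS x y V' c = y c c * XX x V' := by
  rw [fS, XX, Finset.mul_sum]
  apply Finset.sum_congr rfl
  intro j hj
  rw [w, if_pos (hub j hj)]

lemma fS_split {V' : Finset ℕ} {i c : ℕ} (hc : c ∈ V') (hic : i < c) :
    fS x y V' i = x i * y i c + fS x y (V'.erase c) i := by
  rw [fS, fS, ← Finset.sum_erase_add V' _ hc, add_comm]
  congr 1
  rw [w, if_neg (Nat.not_le.2 hic)]

/-- `(◇)` holds for every nonempty finite set. -/
lemma dia_all : ∀ (n : ℕ) (V : Finset ℕ), V.card ≤ n → V.Nonempty → Dia x y V := by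
  intro n
  induction n with
  | zero =>
    intro V hcard hV
    exact absurd (Finset.card_pos.2 hV) (by omega)
  | succ n ihn =>
    intro V hcard hV
    rcases Nat.lt_or_ge V.card 2 with h1 | h2
    · -- |V| = 1
      have : V.card = 1 := le_antisymm (by omega) (Finset.card_pos.2 hV)
      obtain ⟨a, rfl⟩ := Finset.card_eq_one.1 this
      have hfa : fmin {a} = a := fmin_eq_of (Finset.mem_singleton_self a)
        (fun i hi => le_of_eq (Finset.mem_singleton.1 hi).symm)
      rw [Dia, hfa]
      have h0 : ({a} : Finset ℕ) \ {a} = ∅ := Finset.sdiff_self _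
      rw [h0, Finset.powerset_empty, Finset.sum_singleton, phi, phi]
      rw [Finset.sdiff_empty, Finset.sdiff_self, Finset.prod_empty]
      rw [tA_one (by simp)]
      simp
    · -- |V| ≥ 2
      set m : ℕ := fmin V with hmdef
      set M : ℕ := fmax V with hMdef
      have hmV : m ∈ V := fmin_mem hV
      have hMV : M ∈ V := fmax_mem hV
      have hmM : m ≠ M := by
        rw [hmdef, hMdef, fmin_eq hV, fmax_eq hV]
        exact ne_of_lt (Finset.min'_lt_max'_of_card V (by omega))
      have hltM : ∀ i ∈ V, i ≠ M → i < M := fun i hi hne =>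
        lt_of_le_of_ne (le_fmax hi) hne
      set V1 : Finset ℕ := V.erase M with hV1def
      have hmV1 : m ∈ V1 := Finset.mem_erase.2 ⟨hmM, hmV⟩
      have hV1V : V1 ⊆ V := Finset.erase_subset _ _
      have hminV1 : fmin V1 = m := fmin_eq_of hmV1 (fun i hi => fmin_le (hV1V hi))
      have hV1card : V1.card ≤ n := by
        rw [hV1def, Finset.card_erase_of_mem hMV]
        omega
      set s2 : Finset ℕ := V1 \ {m} with hs2def
      have hs2fact : ∀ i ∈ s2, i ∈ V ∧ i ≠ m ∧ i ≠ M := by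
        intro i hi
        simp only [hs2def, hV1def, Finset.mem_sdiff, Finset.mem_erase,
          Finset.mem_singleton] at hi
        tauto
      have hMs2 : M ∉ s2 := fun h => (hs2fact M h).2.2 rfl
      have hVm : V \ {m} = insert M s2 := by
        ext i
        simp only [hs2def, hV1def, Finset.mem_sdiff, Finset.mem_insert,
          Finset.mem_erase, Finset.mem_singleton]
        constructor
        · rintro ⟨hiV, him⟩
          by_cases hiM : i = M
          · exact Or.inl hiM
          · exact Or.inr ⟨⟨hiM, hiV⟩, him⟩
        · rintro (rfl | ⟨⟨hiM, hiV⟩, him⟩)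
          · exact ⟨hMV, fun h => hmM h.symm⟩
          · exact ⟨hiV, him⟩
      have hs2V1 : s2 ⊆ V1 := Finset.sdiff_subset
      have hfmaxV : fmax V = M := hMdef.symm
      -- the per-Z key identity
      have hKEY : ∀ Z ∈ s2.powerset,
          (XX x V1 + x M) * phi x y V1 ({m} ∪ Z)
            = x m * ∑ B ∈ (s2 \ Z).powerset, phi x y B ∅ * phi x y (V1 \ B) ({m} ∪ Z)
            + ∑ C ∈ (s2 \ Z).powerset,
                (XX x (Z ∪ C) + x M) * (phi x y (Z ∪ C) Z * tA x y (V1 \ (Z ∪ C))) := by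
        intro Z hZ
        rw [Finset.mem_powerset] at hZ
        have hmZ : m ∉ Z := fun h => (hs2fact m (hZ h)).2.1 rfl
        have hZV1 : Z ⊆ V1 \ {fmin V1} := by rw [hminV1]; exact hZ
        have ha := G1 (fun W hW hcW => ihn W hcW hW) Z V1 ⟨m, hmV1⟩ hV1card hZV1
        rw [hminV1] at ha
        have hidx : (V1 \ {m}) \ Z = s2 \ Z := rfl
        rw [hidx] at ha
        -- hc : exchange of marked blocks (via Dfull)
        have hc : ∑ C ∈ (s2 \ Z).powerset,
              phi x y (Z ∪ C) Z * phi x y (V1 \ (Z ∪ C)) {m}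
            = ∑ B ∈ (s2 \ Z).powerset, phi x y B ∅ * phi x y (V1 \ B) ({m} ∪ Z) := by
          have e1 : (V1 \ Z) \ {m} = s2 \ Z := by
            ext i
            simp only [hs2def, Finset.mem_sdiff, Finset.mem_singleton]
            tauto
          have e2 : (V1 \ ∅) \ (Z ∪ {m}) = s2 \ Z := by
            ext i
            simp only [hs2def, Finset.mem_sdiff, Finset.mem_union, not_or,
              Finset.mem_singleton, Finset.notMem_empty, not_false_iff, and_true,
              Finset.sdiff_empty]
            tauto
          have hDf := Dfull (x := x) (y := y) (U := V1) Z
            (hZ.trans hs2V1) (Finset.singleton_subset_iff.2 hmV1)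
            (Finset.disjoint_singleton_right.2 hmZ)
          rw [SS, SS, e1, e2] at hDf
          rw [hDf]
          apply Finset.sum_congr rfl
          intro B hB
          rw [Finset.empty_union, Finset.union_comm Z {m}]
        -- hb
        have hb : XX x V1 * phi x y V1 ({m} ∪ Z)
            = ∑ C ∈ (s2 \ Z).powerset,
                XX x (Z ∪ C) * (phi x y (Z ∪ C) Z * tA x y (V1 \ (Z ∪ C)))
              + x m * ∑ B ∈ (s2 \ Z).powerset,
                  phi x y B ∅ * phi x y (V1 \ B) ({m} ∪ Z) := by
          rw [ha, Finset.mul_sum]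
          have hsplit : ∀ C ∈ (s2 \ Z).powerset,
              XX x V1 * (phi x y (Z ∪ C) Z * tA x y (V1 \ (Z ∪ C)))
                = XX x (Z ∪ C) * (phi x y (Z ∪ C) Z * tA x y (V1 \ (Z ∪ C)))
                  + x m * (phi x y (Z ∪ C) Z * phi x y (V1 \ (Z ∪ C)) {m}) := by
            intro C hC
            rw [Finset.mem_powerset] at hC
            have hZC : Z ∪ C ⊆ V1 := Finset.union_subset (hZ.trans hs2V1)
              ((hC.trans Finset.sdiff_subset).trans hs2V1)
            have hmZC : m ∈ V1 \ (Z ∪ C) := by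
              simp only [Finset.mem_sdiff, Finset.mem_union, not_or]
              refine ⟨hmV1, hmZ, fun h => ?_⟩
              exact (hs2fact m (Finset.sdiff_subset (hC h))).2.1 rfl
            have hmin' : fmin (V1 \ (Z ∪ C)) = m := fmin_eq_of hmZC
              (fun i hi => fmin_le (hV1V (Finset.mem_sdiff.1 hi).1))
            have hXsplit : XX x V1 = XX x (Z ∪ C) + XX x (V1 \ (Z ∪ C)) := by
              rw [XX, XX, XX, add_comm, Finset.sum_sdiff hZC]
            have hL0 := L0 (x := x) (y := y) ⟨m, hmZC⟩
            rw [hmin'] at hL0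
            rw [hXsplit, add_mul]
            congr 1
            rw [mul_comm (phi x y (Z ∪ C) Z) (tA x y (V1 \ (Z ∪ C))), ← mul_assoc,
              hL0]
            ring
          rw [Finset.sum_congr rfl hsplit, Finset.sum_add_distrib]
          congr 1
          simp only [← Finset.mul_sum]
          rw [hc]
        -- combine
        have hdistr : ∑ C ∈ (s2 \ Z).powerset,
            (XX x (Z ∪ C) + x M) * (phi x y (Z ∪ C) Z * tA x y (V1 \ (Z ∪ C)))
            = (∑ C ∈ (s2 \ Z).powerset,
                XX x (Z ∪ C) * (phi x y (Z ∪ C) Z * tA x y (V1 \ (Z ∪ C))))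
              + ∑ C ∈ (s2 \ Z).powerset,
                x M * (phi x y (Z ∪ C) Z * tA x y (V1 \ (Z ∪ C))) := by
          rw [← Finset.sum_add_distrib]
          apply Finset.sum_congr rfl
          intro C _
          rw [add_mul]
        have haM : x M * phi x y V1 ({m} ∪ Z) = ∑ C ∈ (s2 \ Z).powerset,
            x M * (phi x y (Z ∪ C) Z * tA x y (V1 \ (Z ∪ C))) := by
          rw [ha, Finset.mul_sum]
        rw [add_mul, hb, haM, hdistr]
        ring
      -- facts for the expansion of factors
      have hfSV : ∀ i ∈ s2, fS x y V i = x i * y i M + fS x y V1 i := by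
        intro i hi
        obtain ⟨hiV, _, hiM⟩ := hs2fact i hi
        exact fS_split hMV (hltM i hiV hiM)
      -- LHS expansion
      have hXV : XX x V = XX x V1 + x M := by
        rw [XX, XX, ← Finset.sum_erase_add V x hMV]
      have hphiV1 : ∀ Z, Z ⊆ s2 →
          ∏ i ∈ s2 \ Z, fS x y V1 i = phi x y V1 ({m} ∪ Z) := by
        intro Z hZ
        rw [phi]
        congr 1
        ext i
        simp only [hs2def, Finset.mem_sdiff, Finset.mem_union, Finset.mem_singleton,
          not_or]
        tauto
      have hLHS : phi x y V {m} = ∑ Z ∈ s2.powerset,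
          (y M M * ∏ i ∈ Z, x i * y i M) * ((XX x V1 + x M) * phi x y V1 ({m} ∪ Z)) := by
        rw [phi, hVm, Finset.prod_insert hMs2]
        rw [show fS x y V M = y M M * XX x V from fS_top (fun i hi => le_fmax hi)]
        rw [Finset.prod_congr rfl hfSV, Finset.prod_add, hXV, Finset.mul_sum]
        apply Finset.sum_congr rfl
        intro Z hZ
        rw [Finset.mem_powerset] at hZ
        rw [hphiV1 Z hZ]
        ring
      -- RHS part (i)
      have h_i : ∑ B ∈ s2.powerset, phi x y B ∅ * tA x y (V \ B)
          = ∑ Z ∈ s2.powerset, (y M M * ∏ i ∈ Z, x i * y i M) *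
              (x m * ∑ B ∈ (s2 \ Z).powerset,
                phi x y B ∅ * phi x y (V1 \ B) ({m} ∪ Z)) := by
        have hstep : ∀ B ∈ s2.powerset, phi x y B ∅ * tA x y (V \ B)
            = ∑ Z ∈ (s2 \ B).powerset, (y M M * ∏ i ∈ Z, x i * y i M) *
                (x m * (phi x y B ∅ * phi x y (V1 \ B) ({m} ∪ Z))) := by
          intro B hB
          rw [Finset.mem_powerset] at hB
          have hBfact := fun i hi => hs2fact i (hB hi)
          have hmB : m ∈ V \ B := Finset.mem_sdiff.2 ⟨hmV, fun h => (hBfact m h).2.1 rfl⟩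
          have hMB : M ∈ V \ B := Finset.mem_sdiff.2 ⟨hMV, fun h => (hBfact M h).2.2 rfl⟩
          have hcard2 : 2 ≤ (V \ B).card := by
            rw [Nat.succ_le_iff, Finset.one_lt_card]
            exact ⟨m, hmB, M, hMB, hmM⟩
          have hfmin' : fmin (V \ B) = m := fmin_eq_of hmB
            (fun i hi => fmin_le (Finset.mem_sdiff.1 hi).1)
          have hfmax' : fmax (V \ B) = M := fmax_eq_of hMB
            (fun i hi => le_fmax (Finset.mem_sdiff.1 hi).1)
          have e4 : (V \ B) \ {m, M} = s2 \ B := by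
            ext i
            simp only [hs2def, hV1def, Finset.mem_sdiff, Finset.mem_insert,
              Finset.mem_singleton, Finset.mem_erase, not_or]
            constructor
            · rintro ⟨⟨hiV, hiB⟩, him, hiM⟩
              exact ⟨⟨⟨hiM, hiV⟩, him⟩, hiB⟩
            · rintro ⟨⟨⟨hiM, hiV⟩, him⟩, hiB⟩
              exact ⟨⟨hiV, hiB⟩, him, hiM⟩
          have e5 : (V \ B).erase M = V1 \ B := by
            ext i
            simp only [hV1def, Finset.mem_sdiff, Finset.mem_erase]
            tauto
          have hfSVB : ∀ i ∈ s2 \ B,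
              fS x y (V \ B) i = x i * y i M + fS x y (V1 \ B) i := by
            intro i hi
            rw [Finset.mem_sdiff] at hi
            obtain ⟨hiV, _, hiM⟩ := hs2fact i hi.1
            rw [← e5]
            exact fS_split hMB (hltM i hiV hiM)
          have e6 : ∀ Z, Z ⊆ s2 \ B →
              ∏ i ∈ (s2 \ B) \ Z, fS x y (V1 \ B) i = phi x y (V1 \ B) ({m} ∪ Z) := by
            intro Z hZ
            rw [phi]
            congr 1
            ext i
            simp only [hs2def, hV1def, Finset.mem_sdiff, Finset.mem_union,
              Finset.mem_singleton, Finset.mem_erase, not_or]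
            constructor
            · rintro ⟨⟨⟨⟨hiM, hiV⟩, him⟩, hiB⟩, hiZ⟩
              exact ⟨⟨⟨hiM, hiV⟩, hiB⟩, him, hiZ⟩
            · rintro ⟨⟨⟨hiM, hiV⟩, hiB⟩, him, hiZ⟩
              exact ⟨⟨⟨⟨hiM, hiV⟩, him⟩, hiB⟩, hiZ⟩
          rw [tA_eq hcard2, hfmin', hfmax', e4, Finset.prod_congr rfl hfSVB,
            Finset.prod_add, Finset.mul_sum, Finset.mul_sum]
          apply Finset.sum_congr rfl
          intro Z hZ
          rw [Finset.mem_powerset] at hZ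
          rw [e6 Z hZ]
          ring
        rw [Finset.sum_congr rfl hstep, SWAP]
        apply Finset.sum_congr rfl
        intro Z hZ
        rw [Finset.mul_sum, Finset.mul_sum]
      -- RHS part (ii)
      have h_ii : ∑ B1 ∈ s2.powerset,
            phi x y (insert M B1) ∅ * tA x y (V \ insert M B1)
          = ∑ Z ∈ s2.powerset, (y M M * ∏ i ∈ Z, x i * y i M) *
              ∑ C ∈ (s2 \ Z).powerset,
                (XX x (Z ∪ C) + x M) * (phi x y (Z ∪ C) Z * tA x y (V1 \ (Z ∪ C))) := by
        have hstep : ∀ B1 ∈ s2.powerset,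
            phi x y (insert M B1) ∅ * tA x y (V \ insert M B1)
            = ∑ Z ∈ B1.powerset, (y M M * ∏ i ∈ Z, x i * y i M) *
                ((XX x B1 + x M) * (phi x y B1 Z * tA x y (V1 \ B1))) := by
          intro B1 hB1
          rw [Finset.mem_powerset] at hB1
          have hB1fact := fun i hi => hs2fact i (hB1 hi)
          have hMB1 : M ∉ B1 := fun h => (hB1fact M h).2.2 rfl
          have hMmem : M ∈ insert M B1 := Finset.mem_insert_self _ _
          have hfmaxB : fmax (insert M B1) = M := fmax_eq_of hMmem
            (by
              intro i hi
              rcases Finset.mem_insert.1 hi with rfl | hi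
              · exact le_refl _
              · exact le_fmax (hB1fact i hi).1)
          have hXB : XX x (insert M B1) = XX x B1 + x M := by
            rw [XX, XX, Finset.sum_insert hMB1, add_comm]
          have hfSB : ∀ i ∈ B1,
              fS x y (insert M B1) i = x i * y i M + fS x y B1 i := by
            intro i hi
            obtain ⟨hiV, _, hiM⟩ := hB1fact i hi
            have := fS_split (x := x) (y := y) (V' := insert M B1) hMmem
              (hltM i hiV hiM)
            rwa [Finset.erase_insert hMB1] at this
          have e7 : V \ insert M B1 = V1 \ B1 := by
            ext i
            simp only [hV1def, Finset.mem_sdiff, Finset.mem_insert, Finset.mem_erase,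
              not_or]
            tauto
          have hphiB : phi x y (insert M B1) ∅
              = (y M M * (XX x B1 + x M)) * ∑ Z ∈ B1.powerset,
                  (∏ i ∈ Z, x i * y i M) * phi x y B1 Z := by
            rw [phi, Finset.sdiff_empty, Finset.prod_insert hMB1,
              show fS x y (insert M B1) M = y M M * XX x (insert M B1) from
                fS_top (by
                  intro i hi
                  rcases Finset.mem_insert.1 hi with rfl | hi
                  · exact le_refl _
                  · exact le_fmax (hB1fact i hi).1),
              hXB, Finset.prod_congr rfl hfSB, Finset.prod_add]
            have : ∀ Z ∈ B1.powerset,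
                (∏ i ∈ Z, x i * y i M) * ∏ i ∈ B1 \ Z, fS x y B1 i
                = (∏ i ∈ Z, x i * y i M) * phi x y B1 Z := by
              intro Z hZ
              rw [phi]
            rw [Finset.sum_congr rfl this]
          rw [hphiB, e7, Finset.mul_sum, Finset.sum_mul]
          apply Finset.sum_congr rfl
          intro Z hZ
          ring
        rw [Finset.sum_congr rfl hstep, PAIR]
        apply Finset.sum_congr rfl
        intro Z hZ
        rw [Finset.mul_sum]
      -- final assembly
      rw [Dia, ← hmdef, hVm, Finset.sum_powerset_insert hMs2, h_i, h_ii, hLHS,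
        ← Finset.sum_add_distrib]
      apply Finset.sum_congr rfl
      intro Z hZ
      rw [hKEY Z hZ]
      ring

lemma PHI0 {B : Finset ℕ} (hB : B.Nonempty) :
    x (fmin B) * (∑ j ∈ B, y (fmin B) j) * phi x y B {fmin B} = phi x y B ∅ := by
  rw [phi, phi, Finset.sdiff_empty, ← Finset.mul_prod_erase B _ (fmin_mem hB),
    fS_fmin hB, Finset.erase_eq]

lemma sum_filter_insert {s : Finset ℕ} {a : ℕ} (ha : a ∉ s) (f : Finset ℕ → R) :
    ∑ B ∈ (insert a s).powerset.filter (fun B => a ∈ B), f B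
      = ∑ t ∈ s.powerset, f (insert a t) := by
  apply Finset.sum_nbij' (i := fun B => B.erase a) (j := fun t => insert a t)
  · intro B hB
    rw [Finset.mem_filter, Finset.mem_powerset] at hB
    rw [Finset.mem_powerset]
    intro i hi
    rw [Finset.mem_erase] at hi
    have := hB.1 hi.2
    rw [Finset.mem_insert] at this
    tauto
  · intro t ht
    rw [Finset.mem_powerset] at ht
    rw [Finset.mem_filter, Finset.mem_powerset]
    exact ⟨Finset.insert_subset_insert a ht, Finset.mem_insert_self _ _⟩
  · intro B hB
    rw [Finset.mem_filter] at hB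
    exact Finset.insert_erase hB.2
  · intro t ht
    rw [Finset.mem_powerset] at ht
    exact Finset.erase_insert (fun h => ha (ht h))
  · intro B hB
    rw [Finset.mem_filter] at hB
    rw [Finset.insert_erase hB.2]

lemma RHS_param {A' : Finset ℕ} {a m' : ℕ} (ha : a ∈ A') (hne : a ≠ m')
    (f : Finset ℕ → R) :
    ∑ B ∈ A'.powerset.filter (fun B => a ∈ B ∧ m' ∉ B), f B
      = ∑ B0 ∈ ((A' \ {m'}).erase a).powerset, f (insert a B0) := by
  have ha' : a ∈ A' \ {m'} := Finset.mem_sdiff.2 ⟨ha, by simpa using hne⟩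
  have hset : A'.powerset.filter (fun B => a ∈ B ∧ m' ∉ B)
      = (A' \ {m'}).powerset.filter (fun B => a ∈ B) := by
    ext B
    simp only [Finset.mem_filter, Finset.mem_powerset, Finset.subset_sdiff,
      Finset.disjoint_singleton_right]
    constructor
    · rintro ⟨h1, h2, h3⟩
      exact ⟨⟨h1, h3⟩, h2⟩
    · rintro ⟨⟨h1, h3⟩, h2⟩
      exact ⟨h1, h2, h3⟩
  rw [hset]
  conv_lhs => rw [show (A' \ {m'}) = insert a ((A' \ {m'}).erase a) from
    (Finset.insert_erase ha').symm]
  rw [sum_filter_insert (Finset.notMem_erase _ _)]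

lemma SWAPNE {U' : Finset ℕ} (G : Finset ℕ → Finset ℕ → R) :
    ∑ B0 ∈ U'.powerset, ∑ E ∈ ((U' \ B0).powerset).erase ∅, G B0 E
      = ∑ E ∈ (U'.powerset).erase ∅, ∑ B0 ∈ (U' \ E).powerset, G B0 E := by
  have h1 : ∀ B0 ∈ U'.powerset,
      ∑ E ∈ ((U' \ B0).powerset).erase ∅, G B0 E
        = (∑ E ∈ (U' \ B0).powerset, G B0 E) - G B0 ∅ := by
    intro B0 _
    rw [eq_sub_iff_add_eq]
    exact Finset.sum_erase_add _ _ (Finset.empty_mem_powerset _)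
  have h2 : ∑ E ∈ (U'.powerset).erase ∅, ∑ B0 ∈ (U' \ E).powerset, G B0 E
      = (∑ E ∈ U'.powerset, ∑ B0 ∈ (U' \ E).powerset, G B0 E)
        - ∑ B0 ∈ (U' \ ∅).powerset, G B0 ∅ := by
    rw [eq_sub_iff_add_eq]
    exact Finset.sum_erase_add _ _ (Finset.empty_mem_powerset _)
  rw [Finset.sum_congr rfl h1, Finset.sum_sub_distrib, h2, Finset.sdiff_empty,
    SWAP]

/-- The main recursion, generically, with cancellation hypotheses. -/
theorem main_generic [IsDomain R] (hX : ∀ S : Finset ℕ, S.Nonempty → XX x S ≠ 0) :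
    ∀ (n : ℕ) (A : Finset ℕ), A.card ≤ n → 2 ≤ A.card →
    ∀ a ∈ A, a ≠ fmin A →
    tA x y A = ∑ B ∈ A.powerset.filter (fun B => a ∈ B ∧ fmin A ∉ B),
      x (fmin A) * (∑ j ∈ B, y (fmin B) j) * tA x y B * tA x y (A \ B) := by
  intro n
  induction n with
  | zero =>
    intro A hA h2
    omega
  | succ n ihn =>
    intro A hcard h2 a haA ham
    set m : ℕ := fmin A with hmdef
    have hmA : m ∈ A := fmin_mem ⟨a, haA⟩
    have haAm : a ∈ A \ {m} := Finset.mem_sdiff.2 ⟨haA, by simpa using ham⟩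
    set U' : Finset ℕ := (A \ {m}).erase a with hU'def
    have haU' : a ∉ U' := Finset.notMem_erase _ _
    have hU'fact : ∀ i ∈ U', i ∈ A ∧ i ≠ m ∧ i ≠ a := by
      intro i hi
      simp only [hU'def, Finset.mem_erase, Finset.mem_sdiff, Finset.mem_singleton] at hi
      tauto
    have hAmU' : A \ {m} = insert a U' := (Finset.insert_erase haAm).symm
    -- abbreviations
    set F0 : Finset ℕ → R := fun B => x m * (∑ j ∈ B, y (fmin B) j) * tA x y B
      with hF0def
    -- facts for B = insert a B0 with B0 ⊆ U'
    have hBfacts : ∀ B0 ∈ U'.powerset,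
        (insert a B0 : Finset ℕ).Nonempty ∧ insert a B0 ⊆ A ∧ m ∉ insert a B0
          ∧ m ∈ A \ insert a B0 ∧ fmin (A \ insert a B0) = m
          ∧ (A \ insert a B0) \ {m} = U' \ B0 := by
      intro B0 hB0
      rw [Finset.mem_powerset] at hB0
      have hBA : insert a B0 ⊆ A := Finset.insert_subset haA
        (fun i hi => (hU'fact i (hB0 hi)).1)
      have hmB : m ∉ insert a B0 := by
        rw [Finset.mem_insert]
        push_neg
        exact ⟨fun h => ham h.symm, fun h => (hU'fact m (hB0 h)).2.1 rfl⟩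
      have hmC : m ∈ A \ insert a B0 := Finset.mem_sdiff.2 ⟨hmA, hmB⟩
      refine ⟨⟨a, Finset.mem_insert_self _ _⟩, hBA, hmB, hmC, ?_, ?_⟩
      · exact fmin_eq_of hmC (fun i hi => fmin_le (Finset.mem_sdiff.1 hi).1)
      · ext i
        simp only [hU'def, Finset.mem_sdiff, Finset.mem_erase, Finset.mem_insert,
          Finset.mem_singleton, not_or]
        tauto
    -- step 1 : rewrite the RHS sum in parameterized form
    rw [RHS_param haA ham]
    rw [← hU'def]
    have hRHSdef : ∑ B0 ∈ U'.powerset,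
        x m * (∑ j ∈ insert a B0, y (fmin (insert a B0)) j) * tA x y (insert a B0)
          * tA x y (A \ insert a B0)
        = ∑ B0 ∈ U'.powerset, F0 (insert a B0) * tA x y (A \ insert a B0) := rfl
    rw [hRHSdef]
    set RHS : R := ∑ B0 ∈ U'.powerset, F0 (insert a B0) * tA x y (A \ insert a B0)
      with hRHSset
    -- the common quantities
    set S1 : R := ∑ B0 ∈ U'.powerset,
      phi x y (insert a B0) ∅ * tA x y (A \ insert a B0) with hS1def
    set T : R := ∑ B0 ∈ U'.powerset, ∑ E ∈ ((U' \ B0).powerset).erase ∅,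
      F0 (insert a B0) * (phi x y E ∅ * tA x y ((A \ insert a B0) \ E)) with hTdef
    -- E1 : XX A * RHS
    have hE1 : XX x A * RHS = x m * S1 + x m * RHS + x m * T := by
      rw [hRHSset, Finset.mul_sum]
      have hterm : ∀ B0 ∈ U'.powerset,
          XX x A * (F0 (insert a B0) * tA x y (A \ insert a B0))
          = x m * (phi x y (insert a B0) ∅ * tA x y (A \ insert a B0))
            + x m * (F0 (insert a B0) * tA x y (A \ insert a B0))
            + x m * ∑ E ∈ ((U' \ B0).powerset).erase ∅,
                F0 (insert a B0) * (phi x y E ∅ * tA x y ((A \ insert a B0) \ E)) := by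
        intro B0 hB0
        obtain ⟨hBne, hBA, hmB, hmC, hfminC, hCm⟩ := hBfacts B0 hB0
        set B : Finset ℕ := insert a B0
        set C : Finset ℕ := A \ B
        have hXsplit : XX x A = XX x B + XX x C := by
          rw [XX, XX, XX, add_comm, Finset.sum_sdiff hBA]
        have hXB : XX x B * tA x y B = x (fmin B) * phi x y B {fmin B} := L0 hBne
        have hXC : XX x C * tA x y C = x m * phi x y C {m} := by
          have := L0 (x := x) (y := y) ⟨m, hmC⟩
          rwa [hfminC] at this
        have hphiB : F0 B * XX x B = x m * phi x y B ∅ := by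
          rw [hF0def]
          dsimp only
          calc x m * (∑ j ∈ B, y (fmin B) j) * tA x y B * XX x B
              = x m * ((∑ j ∈ B, y (fmin B) j) * (XX x B * tA x y B)) := by ring
            _ = x m * ((∑ j ∈ B, y (fmin B) j)
                  * (x (fmin B) * phi x y B {fmin B})) := by rw [hXB]
            _ = x m * (x (fmin B) * (∑ j ∈ B, y (fmin B) j)
                  * phi x y B {fmin B}) := by ring
            _ = x m * phi x y B ∅ := by rw [PHI0 hBne]
        have hdia : phi x y C {m} = tA x y C + ∑ E ∈ ((U' \ B0).powerset).erase ∅,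
            phi x y E ∅ * tA x y (C \ E) := by
          have hd := dia_all (x := x) (y := y) C.card C (le_refl _) ⟨m, hmC⟩
          rw [Dia, hfminC, hCm] at hd
          rw [hd, ← Finset.sum_erase_add _ _ (Finset.empty_mem_powerset (U' \ B0))]
          rw [phi, Finset.sdiff_empty, Finset.prod_empty, Finset.sdiff_empty, one_mul,
            add_comm]
        have key : F0 B * (x m * phi x y C {m})
            = x m * (F0 B * tA x y C)
              + x m * ∑ E ∈ ((U' \ B0).powerset).erase ∅,
                  F0 B * (phi x y E ∅ * tA x y (C \ E)) := by
          calc F0 B * (x m * phi x y C {m})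
              = x m * (F0 B * phi x y C {m}) := by ring
            _ = x m * (F0 B * tA x y C + F0 B * ∑ E ∈ ((U' \ B0).powerset).erase ∅,
                  phi x y E ∅ * tA x y (C \ E)) := by rw [hdia, mul_add]
            _ = x m * (F0 B * tA x y C) + x m * (F0 B * ∑ E ∈ ((U' \ B0).powerset).erase ∅,
                  phi x y E ∅ * tA x y (C \ E)) := by rw [mul_add]
            _ = x m * (F0 B * tA x y C) + x m * ∑ E ∈ ((U' \ B0).powerset).erase ∅,
                  F0 B * (phi x y E ∅ * tA x y (C \ E)) := by rw [Finset.mul_sum]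
        calc XX x A * (F0 B * tA x y C)
            = F0 B * XX x B * tA x y C + F0 B * (XX x C * tA x y C) := by
              rw [hXsplit]; ring
          _ = x m * phi x y B ∅ * tA x y C + F0 B * (x m * phi x y C {m}) := by
              rw [hphiB, hXC]
          _ = _ := by
              rw [key]; ring
      rw [Finset.sum_congr rfl hterm, Finset.sum_add_distrib, Finset.sum_add_distrib,
        hS1def, hTdef, ← Finset.mul_sum, ← Finset.mul_sum, ← Finset.mul_sum]
    -- E2 : XX A * tA A
    have hE2 : XX x A * tA x y A = x m * S1 + x m * tA x y A + x m * T := by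
      have hL0A : XX x A * tA x y A = x m * phi x y A {m} := by
        have := L0 (x := x) (y := y) ⟨a, haA⟩
        rwa [← hmdef] at this
      have hdA := dia_all (x := x) (y := y) A.card A (le_refl _) ⟨a, haA⟩
      rw [Dia, ← hmdef, hAmU', Finset.sum_powerset_insert haU'] at hdA
      -- first part : split off ∅ and apply IH
      have hfirst : ∑ B' ∈ U'.powerset, phi x y B' ∅ * tA x y (A \ B')
          = tA x y A + T := by
        rw [← Finset.sum_erase_add _ _ (Finset.empty_mem_powerset U')]
        rw [phi, Finset.sdiff_empty, Finset.sdiff_empty, Finset.prod_empty, one_mul]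
        rw [add_comm]
        congr 1
        -- the nonempty part equals T
        have hstep : ∀ B' ∈ (U'.powerset).erase ∅,
            phi x y B' ∅ * tA x y (A \ B')
            = ∑ B0 ∈ (U' \ B').powerset,
                F0 (insert a B0) * (phi x y B' ∅ * tA x y ((A \ insert a B0) \ B')) := by
          intro B' hB'
          rw [Finset.mem_erase, Finset.mem_powerset] at hB'
          obtain ⟨hB'ne, hB'U⟩ := hB'
          have hB'fact := fun i hi => hU'fact i (hB'U hi)
          have hB'A : B' ⊆ A := fun i hi => (hB'fact i hi).1
          have haD : a ∈ A \ B' := Finset.mem_sdiff.2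
            ⟨haA, fun h => (hB'fact a h).2.2 rfl⟩
          have hmD : m ∈ A \ B' := Finset.mem_sdiff.2
            ⟨hmA, fun h => (hB'fact m h).2.1 rfl⟩
          have hfminD : fmin (A \ B') = m := fmin_eq_of hmD
            (fun i hi => fmin_le (Finset.mem_sdiff.1 hi).1)
          have hcard2 : 2 ≤ (A \ B').card := by
            rw [Nat.succ_le_iff, Finset.one_lt_card]
            exact ⟨m, hmD, a, haD, fun h => ham h.symm⟩
          have hcardlt : (A \ B').card ≤ n := by
            have h1 : (A \ B').card = A.card - B'.card := Finset.card_sdiff_of_subset hB'A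
            have h2 : 1 ≤ B'.card := Finset.card_pos.2 (Finset.nonempty_iff_ne_empty.2 hB'ne)
            have h3 : B'.card ≤ A.card := Finset.card_le_card hB'A
            omega
          have hIH := ihn (A \ B') hcardlt hcard2 a haD (by rw [hfminD]; exact ham)
          rw [hfminD] at hIH
          rw [hIH, RHS_param haD ham, Finset.mul_sum]
          have hidx : ((A \ B') \ {m}).erase a = U' \ B' := by
            ext i
            simp only [hU'def, Finset.mem_erase, Finset.mem_sdiff, Finset.mem_singleton]
            tauto
          rw [hidx]
          apply Finset.sum_congr rfl
          intro B0 hB0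
          have hsd : (A \ B') \ insert a B0 = (A \ insert a B0) \ B' := by
            rw [sdiff_sdiff_comm]
          rw [hsd, hF0def]
          dsimp only
          ring
        rw [Finset.sum_congr rfl hstep, hTdef, SWAPNE]
      rw [hL0A, hdA, hS1def, mul_add, hfirst, mul_add]
      ring
    -- conclude by cancellation
    have hXAm : XX x A = XX x (A \ {m}) + x m := by
      rw [XX, XX, ← Finset.sum_sdiff (Finset.singleton_subset_iff.2 hmA),
        Finset.sum_singleton]
    have hfinal : XX x (A \ {m}) * tA x y A = XX x (A \ {m}) * RHS := by
      rw [hXAm] at hE1 hE2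
      linear_combination hE2 - hE1
    exact mul_left_cancel₀ (hX (A \ {m}) ⟨a, haAm⟩) hfinal

lemma map_tA {S : Type*} [CommRing S] (f : S →+* R) (x : ℕ → S) (y : ℕ → ℕ → S)
    (A : Finset ℕ) :
    f (tA x y A) = tA (fun i => f (x i)) (fun i j => f (y i j)) A := by
  rw [tA, tA]
  split_ifs with h
  · simp only [map_mul, map_prod, map_sum, map_add]
  · exact map_one f

end
end TARec

open scoped Classical in
/-- Recursion for the closed-form polynomials `t_A` (Proposition 3.2):
for `|A| ≥ 2` and a fixed `a ∈ A ∖ {min A}`,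
`t_A = ∑_{B ⊔ C = A, min A ∈ C, a ∈ B} x_{min A} (∑_{j∈B} y_{min B, j}) t_B t_C`. -/
theorem tA_recursion {R : Type*} [CommRing R] (x : ℕ → R) (y : ℕ → ℕ → R)
    (A : Finset ℕ) (hA : 2 ≤ A.card) (hpos : ∀ i ∈ A, 0 < i)
    (a : ℕ) (ha : a ∈ A) (ha' : a ≠ fmin A) :
    tA x y A = ∑ B ∈ A.powerset.filter (fun B => a ∈ B ∧ fmin A ∉ B),
      x (fmin A) * (∑ j ∈ B, y (fmin B) j) * tA x y B * tA x y (A \ B) := by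
  classical
  set gx : ℕ → MvPolynomial (ℕ ⊕ ℕ × ℕ) ℤ := fun i => MvPolynomial.X (Sum.inl i)
    with hgx
  set gy : ℕ → ℕ → MvPolynomial (ℕ ⊕ ℕ × ℕ) ℤ :=
    fun i j => MvPolynomial.X (Sum.inr (i, j)) with hgy
  have hX : ∀ S : Finset ℕ, S.Nonempty → TARec.XX gx S ≠ 0 := by
    intro S hS h
    have h1 := congrArg (MvPolynomial.eval (fun _ => (1 : ℤ))) h
    rw [TARec.XX, map_sum, map_zero] at h1
    simp only [hgx, MvPolynomial.eval_X] at h1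
    rw [Finset.sum_const, nsmul_eq_mul, mul_one] at h1
    have := Finset.card_pos.2 hS
    omega
  have hgen := TARec.main_generic (x := gx) (y := gy) hX A.card A (le_refl _) hA
    a ha ha'
  set f : MvPolynomial (ℕ ⊕ ℕ × ℕ) ℤ →+* R :=
    MvPolynomial.eval₂Hom (Int.castRingHom R)
      (Sum.elim x (fun p => y p.1 p.2)) with hf
  have hfx : ∀ i, f (gx i) = x i := by
    intro i
    simp [hf, hgx]
  have hfy : ∀ i j, f (gy i j) = y i j := by
    intro i j
    simp [hf, hgy]
  have h1 := congrArg f hgen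
  rw [TARec.map_tA, map_sum] at h1
  simp only [map_mul, map_sum, TARec.map_tA, hfx, hfy] at h1
  exact h1
end

section
/- Recursion for the hook-sum generating function Θ_A (Proposition 3.3): for a finite set A of positive integers with |A| ≥ 2, let Θ_A = ∑ over unordered increasing trees T on A (rooted at min(A)) of ∏_{i ∈ A∖{min(A)}} x_{f_T(i)}·(∑_{j ∈ h_T(i)} y_{i,j}), and Θ_A = 1 if |A| = 1. Then for any fixed a ∈ A∖{min(A)}: Θ_A = ∑ over pairs (B,C) with B ⊔ C = A, min(A) ∈ C, a ∈ B, of x_{min(A)}·(∑_{j∈B} y_{min(B),j})·Θ_B·Θ_C. -/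
open scoped Classical in
/-- The hook-sum generating function `Θ_A`: the sum over unordered increasing trees on `A`
(encoded by their parent functions `p : A → A`, fixing the root `min A` and with `p v < v`
for every non-root vertex `v`) of `∏_{i ∈ A ∖ {min A}} x_{f_T(i)} (∑_{j ∈ h_T(i)} y_{i,j})`,
where the hook `h_T(i)` consists of the vertices `j` with `p^[k] j = i` for some `k`.
For `|A| = 1` there is a unique (trivial) tree and `Θ_A = 1`. -/
noncomputable def ThetaA {R : Type*} [CommRing R] (x : ℕ → R) (y : ℕ → ℕ → R)
    (A : Finset ℕ) : R :=
  ∑ p ∈ (Finset.univ : Finset (↥A → ↥A)).filter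
      (fun p => ∀ v : ↥A, ((v : ℕ) = fmin A → p v = v) ∧ ((v : ℕ) ≠ fmin A → (p v : ℕ) < (v : ℕ))),
    ∏ v ∈ Finset.univ.filter (fun v : ↥A => (v : ℕ) ≠ fmin A),
      x (p v) * ∑ u ∈ Finset.univ.filter (fun u : ↥A => ∃ k : ℕ, p^[k] u = v), y (v : ℕ) (u : ℕ)


open scoped Classical

lemma fmin_mem {B : Finset ℕ} (h : B.Nonempty) : fmin B ∈ B := by
  obtain ⟨m, hm⟩ := B.min_of_nonempty h
  have := Finset.mem_of_min hm
  rw [fmin, hm]; exact this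
lemma fmin_le {B : Finset ℕ} {n : ℕ} (h : n ∈ B) : fmin B ≤ n := by
  have h2 := Finset.min_le h
  obtain ⟨m, hm⟩ := B.min_of_nonempty ⟨n, h⟩
  rw [hm] at h2
  rw [fmin, hm]; exact WithTop.coe_le_coe.1 h2
lemma fmin_eq {B : Finset ℕ} {b : ℕ} (hb : b ∈ B) (h : ∀ n ∈ B, b ≤ n) : fmin B = b :=
  le_antisymm (by
    have := fmin_mem (⟨b, hb⟩ : B.Nonempty)
    exact h _ this) (fmin_le hb) |>.symm ▸ rfl

noncomputable def extf (A : Finset ℕ) (p : ↥A → ↥A) : ℕ → ℕ :=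
  fun n => if h : n ∈ A then (p ⟨n, h⟩ : ℕ) else n
noncomputable def Qset (A : Finset ℕ) : Finset (ℕ → ℕ) :=
  ((Finset.univ : Finset (↥A → ↥A)).filter
      (fun p => ∀ v : ↥A, ((v : ℕ) = fmin A → p v = v) ∧ ((v : ℕ) ≠ fmin A → (p v : ℕ) < (v : ℕ)))).image
    (extf A)
lemma extf_injective (A : Finset ℕ) : Function.Injective (extf A) := by
  intro p q h
  funext v
  have := congrFun h (v : ℕ)
  simp only [extf, dif_pos v.2] at this
  exact Subtype.ext (by simpa using this)
lemma mem_Qset {A : Finset ℕ} {p : ℕ → ℕ} :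
    p ∈ Qset A ↔ (∀ n, n ∉ A → p n = n) ∧ (∀ n ∈ A, p n ∈ A) ∧
      (∀ n ∈ A, (n = fmin A → p n = n) ∧ (n ≠ fmin A → p n < n)) := by
  constructor
  · rintro hp
    simp only [Qset, Finset.mem_image, Finset.mem_filter, Finset.mem_univ, true_and] at hp
    obtain ⟨q, hq, rfl⟩ := hp
    refine ⟨fun n hn => by simp [extf, hn], fun n hn => by simp [extf, hn], fun n hn => ?_⟩
    obtain ⟨h1, h2⟩ := hq ⟨n, hn⟩
    constructor
    · intro he; simp only [extf, dif_pos hn]; rw [h1 he]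
    · intro he; simpa [extf, hn] using h2 he
  · rintro ⟨h0, h1, h2⟩
    simp only [Qset, Finset.mem_image, Finset.mem_filter, Finset.mem_univ, true_and]
    refine ⟨fun v => ⟨p v, h1 v v.2⟩, fun v => ⟨fun he => Subtype.ext ((h2 v v.2).1 he),
      fun he => (h2 v v.2).2 he⟩, ?_⟩
    funext n
    by_cases hn : n ∈ A
    · simp [extf, hn]
    · simp [extf, hn, h0 n hn]

section Core
variable {A : Finset ℕ} {p : ℕ → ℕ}

lemma Q_out (hp : p ∈ Qset A) {n : ℕ} (hn : n ∉ A) : p n = n := (mem_Qset.1 hp).1 n hn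
lemma Q_mem (hp : p ∈ Qset A) {n : ℕ} (hn : n ∈ A) : p n ∈ A := (mem_Qset.1 hp).2.1 n hn
lemma Q_lt (hp : p ∈ Qset A) {n : ℕ} (hn : n ∈ A) (hn' : n ≠ fmin A) : p n < n :=
  ((mem_Qset.1 hp).2.2 n hn).2 hn'
lemma Q_le (hp : p ∈ Qset A) {n : ℕ} (hn : n ∈ A) : p n ≤ n := by
  by_cases h : n = fmin A
  · rw [((mem_Qset.1 hp).2.2 n hn).1 h]
  · exact (Q_lt hp hn h).le
lemma Q_fix (hp : p ∈ Qset A) : p (fmin A) = fmin A := by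
  by_cases h : fmin A ∈ A
  · exact ((mem_Qset.1 hp).2.2 _ h).1 rfl
  · exact Q_out hp h
lemma Q_iter_fix (hp : p ∈ Qset A) (k : ℕ) : p^[k] (fmin A) = fmin A :=
  Function.iterate_fixed (Q_fix hp) k
lemma Q_iter_mem (hp : p ∈ Qset A) (k : ℕ) {n : ℕ} (hn : n ∈ A) : p^[k] n ∈ A := by
  induction k with
  | zero => simpa
  | succ k ih => rw [Function.iterate_succ_apply']; exact Q_mem hp ih
lemma Q_iter_le (hp : p ∈ Qset A) (k : ℕ) {n : ℕ} (hn : n ∈ A) : p^[k] n ≤ n := by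
  induction k with
  | zero => simp
  | succ k ih =>
    rw [Function.iterate_succ_apply']
    exact le_trans (Q_le hp (Q_iter_mem hp k hn)) ih
lemma Q_reach (hp : p ∈ Qset A) {n : ℕ} (hn : n ∈ A) : ∃ k, p^[k] n = fmin A := by
  induction n using Nat.strong_induction_on with
  | _ n ih =>
    by_cases h : n = fmin A
    · exact ⟨0, h⟩
    · obtain ⟨k, hk⟩ := ih (p n) (Q_lt hp hn h) (Q_mem hp hn)
      exact ⟨k + 1, by rwa [Function.iterate_succ_apply]⟩

end Core

noncomputable def Bof (A : Finset ℕ) (p : ℕ → ℕ) (b : ℕ) : Finset ℕ :=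
  A.filter (fun n => ∃ k : ℕ, p^[k] n = b)
noncomputable def qof (A : Finset ℕ) (p : ℕ → ℕ) (b : ℕ) : ℕ → ℕ :=
  fun n => if n ∈ Bof A p b ∧ n ≠ b then p n else n
noncomputable def sof (A : Finset ℕ) (p : ℕ → ℕ) (b : ℕ) : ℕ → ℕ :=
  fun n => if n ∈ A ∧ n ∉ Bof A p b then p n else n

section Split
variable {A : Finset ℕ} {p : ℕ → ℕ} {b : ℕ}

lemma mem_Bof {n : ℕ} : n ∈ Bof A p b ↔ n ∈ A ∧ ∃ k : ℕ, p^[k] n = b := Finset.mem_filter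

lemma b_mem_Bof (hb1 : b ∈ A) : b ∈ Bof A p b := mem_Bof.2 ⟨hb1, 0, rfl⟩

lemma fmin_not_mem_Bof (hp : p ∈ Qset A) (hb3 : b ≠ fmin A) : fmin A ∉ Bof A p b := by
  intro h
  obtain ⟨-, k, hk⟩ := mem_Bof.1 h
  rw [Q_iter_fix hp] at hk
  exact hb3 hk.symm

lemma Bof_le (hp : p ∈ Qset A) {n : ℕ} (hn : n ∈ Bof A p b) : b ≤ n := by
  obtain ⟨hnA, k, hk⟩ := mem_Bof.1 hn
  calc b = p^[k] n := hk.symm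
    _ ≤ n := Q_iter_le hp k hnA

lemma fmin_Bof (hp : p ∈ Qset A) (hb1 : b ∈ A) : fmin (Bof A p b) = b :=
  fmin_eq (b_mem_Bof hb1) (fun _ hn => Bof_le hp hn)

lemma Bof_closed (hp : p ∈ Qset A) {n : ℕ} (hn : n ∈ Bof A p b) (hnb : n ≠ b) :
    p n ∈ Bof A p b := by
  obtain ⟨hnA, k, hk⟩ := mem_Bof.1 hn
  cases k with
  | zero => exact absurd hk hnb
  | succ k => exact mem_Bof.2 ⟨Q_mem hp hnA, k, by rwa [Function.iterate_succ_apply] at hk⟩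

lemma Cof_closed (hp : p ∈ Qset A) {n : ℕ} (hn : n ∈ A) (hn' : n ∉ Bof A p b) :
    p n ∈ A ∧ p n ∉ Bof A p b := by
  refine ⟨Q_mem hp hn, fun h => hn' ?_⟩
  obtain ⟨-, k, hk⟩ := mem_Bof.1 h
  exact mem_Bof.2 ⟨hn, k + 1, by rwa [Function.iterate_succ_apply]⟩

lemma Bof_iter (hp : p ∈ Qset A) (hb2 : p b = fmin A) {n : ℕ} (hn : n ∈ Bof A p b) (j : ℕ) :
    p^[j] n ∈ Bof A p b ∨ p^[j] n = fmin A := by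
  induction j with
  | zero => exact Or.inl hn
  | succ j ih =>
    rw [Function.iterate_succ_apply']
    rcases ih with h | h
    · by_cases hb : p^[j] n = b
      · rw [hb, hb2]; exact Or.inr rfl
      · exact Or.inl (Bof_closed hp h hb)
    · rw [h, Q_fix hp]; exact Or.inr rfl

lemma Cof_iter (hp : p ∈ Qset A) {n : ℕ} (hn : n ∈ A) (hn' : n ∉ Bof A p b) (j : ℕ) :
    p^[j] n ∈ A ∧ p^[j] n ∉ Bof A p b := by
  induction j with
  | zero => exact ⟨hn, hn'⟩
  | succ j ih =>
    rw [Function.iterate_succ_apply']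
    exact Cof_closed hp ih.1 ih.2

lemma qof_mem_Qset (hp : p ∈ Qset A) (hb1 : b ∈ A) (hb3 : b ≠ fmin A) :
    qof A p b ∈ Qset (Bof A p b) := by
  rw [mem_Qset, fmin_Bof hp hb1]
  refine ⟨fun n hn => by simp [qof, hn], fun n hn => ?_, fun n hn => ?_⟩
  · by_cases hnb : n = b
    · subst hnb; simp only [qof, ne_eq, not_true_eq_false, and_false, if_false]; exact hn
    · simpa [qof, hn, hnb] using Bof_closed hp hn hnb
  · constructor
    · intro he; simp [qof, he]
    · intro he
      have hr : n ≠ fmin A := fun h => fmin_not_mem_Bof hp hb3 (h ▸ hn)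
      simpa [qof, hn, he] using Q_lt hp (mem_Bof.1 hn).1 hr

lemma fmin_Cof (hp : p ∈ Qset A) (hb1 : b ∈ A) (hb3 : b ≠ fmin A) :
    fmin (A \ Bof A p b) = fmin A := by
  have hAne : A.Nonempty := ⟨b, hb1⟩
  refine fmin_eq (Finset.mem_sdiff.2 ⟨fmin_mem hAne, fmin_not_mem_Bof hp hb3⟩) ?_
  intro n hn
  exact fmin_le (Finset.mem_sdiff.1 hn).1

lemma sof_mem_Qset (hp : p ∈ Qset A) (hb1 : b ∈ A) (hb3 : b ≠ fmin A) :
    sof A p b ∈ Qset (A \ Bof A p b) := by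
  rw [mem_Qset, fmin_Cof hp hb1 hb3]
  refine ⟨fun n hn => ?_, fun n hn => ?_, fun n hn => ?_⟩
  · rw [Finset.mem_sdiff] at hn
    push_neg at hn
    by_cases h : n ∈ A
    · simp [sof, h, hn h]
    · simp [sof, h]
  · rw [Finset.mem_sdiff] at hn
    have := Cof_closed hp hn.1 hn.2
    simpa [sof, hn.1, hn.2, Finset.mem_sdiff] using this
  · rw [Finset.mem_sdiff] at hn
    constructor
    · intro he; simp only [sof, if_pos (And.intro hn.1 hn.2)]; rw [he, Q_fix hp]
    · intro he; simpa [sof, hn.1, hn.2] using Q_lt hp hn.1 he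
end Split

section Hooks
variable {A : Finset ℕ} {p : ℕ → ℕ} {b : ℕ}

lemma p_iter_agree_q (hp : p ∈ Qset A) (hb2 : p b = fmin A)
    {u v : ℕ} {k : ℕ} (hu : u ∈ A) (hk : p^[k] u = v) (hv : v ∈ Bof A p b) (hvb : v ≠ b)
    (hb3 : b ≠ fmin A) :
    u ∈ Bof A p b ∧ (qof A p b)^[k] u = v := by
  obtain ⟨hvA, m, hm⟩ := mem_Bof.1 hv
  have hmemj : ∀ j, j ≤ k → p^[j] u ∈ Bof A p b := by
    intro j hj
    refine mem_Bof.2 ⟨Q_iter_mem hp j hu, m + (k - j), ?_⟩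
    rw [Function.iterate_add_apply, ← Function.iterate_add_apply p (k-j) j,
      Nat.sub_add_cancel hj, hk, hm]
  have hneb : ∀ j, j < k → p^[j] u ≠ b := by
    intro j hj hbj
    have h1 : p^[k] u = fmin A := by
      have : k = (k - (j+1)) + (j+1) := by omega
      rw [this, Function.iterate_add_apply, Function.iterate_succ_apply', hbj, hb2,
        Q_iter_fix hp]
    rw [hk] at h1
    exact fmin_not_mem_Bof hp hb3 (h1 ▸ hv)
  have hagree : ∀ j, j ≤ k → (qof A p b)^[j] u = p^[j] u := by
    intro j hj
    induction j with
    | zero => rfl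
    | succ j ih =>
      rw [Function.iterate_succ_apply', Function.iterate_succ_apply',
        ih (Nat.le_of_succ_le hj)]
      have h1 := hmemj j (Nat.le_of_succ_le hj)
      have h2 := hneb j hj
      simp [qof, h1, h2]
  exact ⟨by simpa using hmemj 0 (Nat.zero_le k), by rw [hagree k le_rfl, hk]⟩

lemma qof_iter_mem (hp : p ∈ Qset A) {u : ℕ} (hu : u ∈ Bof A p b) (j : ℕ) :
    (qof A p b)^[j] u ∈ Bof A p b := by
  induction j with
  | zero => simpa
  | succ j ih =>
    rw [Function.iterate_succ_apply']
    by_cases h : (qof A p b)^[j] u = b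
    · simp only [qof, h]; simpa [h] using ih
    · simpa [qof, ih, h] using Bof_closed hp ih h

lemma q_iter_agree_p (hp : p ∈ Qset A) {u v : ℕ} {k : ℕ}
    (hu : u ∈ Bof A p b) (hk : (qof A p b)^[k] u = v) (hvb : v ≠ b) :
    p^[k] u = v := by
  have hqb : ∀ j, (qof A p b)^[j] b = b := by
    intro j
    refine Function.iterate_fixed ?_ j
    simp [qof]
  have hneb : ∀ j, j < k → (qof A p b)^[j] u ≠ b := by
    intro j hj hbj
    have : (qof A p b)^[k] u = b := by
      have hkj : k = (k - j) + j := by omega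
      rw [hkj, Function.iterate_add_apply, hbj, hqb]
    exact hvb (by rw [← hk, this])
  have hagree : ∀ j, j ≤ k → p^[j] u = (qof A p b)^[j] u := by
    intro j hj
    induction j with
    | zero => rfl
    | succ j ih =>
      rw [Function.iterate_succ_apply', Function.iterate_succ_apply',
        ih (Nat.le_of_succ_le hj)]
      have h1 := qof_iter_mem hp hu j
      have h2 := hneb j hj
      simp [qof, h1, h2]
  rw [hagree k le_rfl, hk]

lemma hook_q (hp : p ∈ Qset A) (hb2 : p b = fmin A) (hb3 : b ≠ fmin A)
    {v : ℕ} (hv : v ∈ Bof A p b) (hvb : v ≠ b) :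
    A.filter (fun u => ∃ k : ℕ, p^[k] u = v)
      = (Bof A p b).filter (fun u => ∃ k : ℕ, (qof A p b)^[k] u = v) := by
  ext u
  simp only [Finset.mem_filter]
  constructor
  · rintro ⟨hu, k, hk⟩
    obtain ⟨h1, h2⟩ := p_iter_agree_q hp hb2 hu hk hv hvb hb3
    exact ⟨h1, k, h2⟩
  · rintro ⟨hu, k, hk⟩
    exact ⟨(mem_Bof.1 hu).1, k, q_iter_agree_p hp hu hk hvb⟩

lemma sof_iter_agree (hp : p ∈ Qset A) {u : ℕ} (hu : u ∈ A) (hu' : u ∉ Bof A p b) (j : ℕ) :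
    (sof A p b)^[j] u = p^[j] u := by
  induction j with
  | zero => rfl
  | succ j ih =>
    rw [Function.iterate_succ_apply', Function.iterate_succ_apply', ih]
    have := Cof_iter hp hu hu' j
    simp [sof, this.1, this.2]

lemma hook_s (hp : p ∈ Qset A) (hb2 : p b = fmin A) (hb3 : b ≠ fmin A)
    {v : ℕ} (hv : v ∈ A) (hv' : v ∉ Bof A p b) (hvr : v ≠ fmin A) :
    A.filter (fun u => ∃ k : ℕ, p^[k] u = v)
      = (A \ Bof A p b).filter (fun u => ∃ k : ℕ, (sof A p b)^[k] u = v) := by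
  ext u
  simp only [Finset.mem_filter, Finset.mem_sdiff]
  constructor
  · rintro ⟨hu, k, hk⟩
    have hu' : u ∉ Bof A p b := by
      intro huB
      rcases Bof_iter hp hb2 huB k with h | h
      · exact hv' (hk ▸ h)
      · exact hvr (hk ▸ h)
    exact ⟨⟨hu, hu'⟩, k, by rw [sof_iter_agree hp hu hu', hk]⟩
  · rintro ⟨⟨hu, hu'⟩, k, hk⟩
    rw [sof_iter_agree hp hu hu'] at hk
    exact ⟨hu, k, hk⟩

end Hooks

noncomputable def Wf {R : Type*} [CommRing R] (x : ℕ → R) (y : ℕ → ℕ → R)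
    (A : Finset ℕ) (p : ℕ → ℕ) : R :=
  ∏ v ∈ A \ {fmin A},
    x (p v) * ∑ u ∈ A.filter (fun u => ∃ k : ℕ, p^[k] u = v), y v u

lemma weight_split {R : Type*} [CommRing R] (x : ℕ → R) (y : ℕ → ℕ → R)
    {A : Finset ℕ} {p : ℕ → ℕ} {b : ℕ}
    (hp : p ∈ Qset A) (hb1 : b ∈ A) (hb2 : p b = fmin A) (hb3 : b ≠ fmin A) :
    Wf x y A p = x (fmin A) * (∑ j ∈ Bof A p b, y (fmin (Bof A p b)) j)
      * Wf x y (Bof A p b) (qof A p b) * Wf x y (A \ Bof A p b) (sof A p b) := by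
  have hrB := fmin_not_mem_Bof hp hb3
  have hbB := b_mem_Bof (p := p) hb1
  have hBsub : Bof A p b ⊆ A := Finset.filter_subset _ _
  -- index set decomposition
  have hsplit : A \ {fmin A} = Bof A p b ∪ ((A \ Bof A p b) \ {fmin A}) := by
    ext n
    simp only [Finset.mem_sdiff, Finset.mem_union, Finset.mem_singleton]
    constructor
    · rintro ⟨hn, hnr⟩
      by_cases h : n ∈ Bof A p b
      · exact Or.inl h
      · exact Or.inr ⟨⟨hn, h⟩, hnr⟩
    · rintro (h | ⟨⟨hn, -⟩, hnr⟩)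
      · exact ⟨hBsub h, fun he => hrB (he ▸ h)⟩
      · exact ⟨hn, hnr⟩
  have hdisj : Disjoint (Bof A p b) ((A \ Bof A p b) \ {fmin A}) := by
    refine Finset.disjoint_left.2 (fun n hn hn' => ?_)
    exact ((Finset.mem_sdiff.1 (Finset.mem_sdiff.1 hn').1).2) hn
  rw [Wf, hsplit, Finset.prod_union hdisj]
  -- split off the b term from the B product
  have hbmem : b ∈ Bof A p b := hbB
  rw [← Finset.mul_prod_erase _ _ hbmem]
  have hterm : x (p b) * ∑ u ∈ A.filter (fun u => ∃ k : ℕ, p^[k] u = b), y b u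
      = x (fmin A) * ∑ j ∈ Bof A p b, y (fmin (Bof A p b)) j := by
    rw [hb2, fmin_Bof hp hb1]
    congr 1
  rw [hterm]
  have hBprod : ∏ v ∈ (Bof A p b).erase b,
      (x (p v) * ∑ u ∈ A.filter (fun u => ∃ k : ℕ, p^[k] u = v), y v u)
      = Wf x y (Bof A p b) (qof A p b) := by
    rw [Wf, fmin_Bof hp hb1, ← Finset.erase_eq]
    refine Finset.prod_congr rfl (fun v hv => ?_)
    have hvB : v ∈ Bof A p b := Finset.mem_of_mem_erase hv
    have hvb : v ≠ b := Finset.ne_of_mem_erase hv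
    rw [hook_q hp hb2 hb3 hvB hvb]
    congr 1
    simp [qof, hvB, hvb]
  have hCprod : ∏ v ∈ (A \ Bof A p b) \ {fmin A},
      (x (p v) * ∑ u ∈ A.filter (fun u => ∃ k : ℕ, p^[k] u = v), y v u)
      = Wf x y (A \ Bof A p b) (sof A p b) := by
    rw [Wf, fmin_Cof hp hb1 hb3]
    refine Finset.prod_congr rfl (fun v hv => ?_)
    simp only [Finset.mem_sdiff, Finset.mem_singleton] at hv
    obtain ⟨⟨hvA, hvB⟩, hvr⟩ := hv
    rw [hook_s hp hb2 hb3 hvA hvB hvr]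
    congr 1
    simp [sof, hvA, hvB]
  rw [hBprod, hCprod]

open scoped Classical in
noncomputable def bvert (A : Finset ℕ) (a : ℕ) (p : ℕ → ℕ) : ℕ :=
  if h : ∃ k : ℕ, p^[k] a = fmin A then p^[Nat.find h - 1] a else 0

lemma bvert_spec {A : Finset ℕ} {p : ℕ → ℕ} {a : ℕ}
    (hp : p ∈ Qset A) (ha : a ∈ A) (ha' : a ≠ fmin A) :
    bvert A a p ∈ A ∧ p (bvert A a p) = fmin A ∧ bvert A a p ≠ fmin A ∧
      ∃ k : ℕ, p^[k] a = bvert A a p := by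
  have hex : ∃ k : ℕ, p^[k] a = fmin A := Q_reach hp ha
  have hpos : 0 < Nat.find hex := by
    refine Nat.pos_of_ne_zero (fun h => ?_)
    exact ha' (by simpa [h] using Nat.find_spec hex)
  have hb : bvert A a p = p^[Nat.find hex - 1] a := by
    rw [bvert, dif_pos hex]
  refine ⟨hb ▸ Q_iter_mem hp _ ha, ?_, ?_, ⟨Nat.find hex - 1, hb.symm⟩⟩
  · rw [hb, ← Function.iterate_succ_apply' p (Nat.find hex - 1) a,
      Nat.succ_eq_add_one, Nat.sub_add_cancel hpos]
    exact Nat.find_spec hex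
  · rw [hb]
    exact Nat.find_min hex (Nat.sub_lt hpos one_pos)

noncomputable def glueF (A B : Finset ℕ) (q s : ℕ → ℕ) : ℕ → ℕ :=
  fun n => if n ∈ B then (if n = fmin B then fmin A else q n) else s n

section Glue
variable {A B : Finset ℕ} {q s : ℕ → ℕ} {a : ℕ}

lemma glue_mem_Qset (hB : B ⊆ A) (haB : a ∈ B) (hrB : fmin A ∉ B)
    (hq : q ∈ Qset B) (hs : s ∈ Qset (A \ B)) : glueF A B q s ∈ Qset A := by
  have hBne : B.Nonempty := ⟨a, haB⟩
  have hAne : A.Nonempty := ⟨a, hB haB⟩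
  have hminB : fmin B ∈ B := fmin_mem hBne
  have hrA : fmin A ∈ A := fmin_mem hAne
  have hrC : fmin A ∈ A \ B := Finset.mem_sdiff.2 ⟨hrA, hrB⟩
  have hminC : fmin (A \ B) = fmin A :=
    fmin_eq hrC (fun n hn => fmin_le (Finset.mem_sdiff.1 hn).1)
  rw [mem_Qset]
  refine ⟨fun n hn => ?_, fun n hn => ?_, fun n hn => ?_⟩
  · have hnB : n ∉ B := fun h => hn (hB h)
    have : n ∉ A \ B := fun h => hn (Finset.mem_sdiff.1 h).1
    simp [glueF, hnB, Q_out hs this]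
  · by_cases h : n ∈ B
    · by_cases h2 : n = fmin B
      · simp [glueF, h, h2, hrA, hminB]
      · simp only [glueF, if_pos h, if_neg h2]
        exact hB (Q_mem hq h)
    · have hnC : n ∈ A \ B := Finset.mem_sdiff.2 ⟨hn, h⟩
      simp only [glueF, if_neg h]
      exact (Finset.mem_sdiff.1 (Q_mem hs hnC)).1
  · constructor
    · intro he
      subst he
      simp only [glueF, if_neg hrB]
      rw [← hminC] at *
      exact Q_fix hs
    · intro he
      by_cases h : n ∈ B
      · by_cases h2 : n = fmin B
        · simp only [glueF, if_pos h, if_pos h2]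
          have : fmin A ≤ n := fmin_le hn
          have hne : fmin A ≠ n := fun hh => hrB (hh ▸ h)
          omega
        · simp only [glueF, if_pos h, if_neg h2]
          have := Q_lt hq h (by rwa [])
          exact this
      · have hnC : n ∈ A \ B := Finset.mem_sdiff.2 ⟨hn, h⟩
        simp only [glueF, if_neg h]
        exact Q_lt hs hnC (by rwa [hminC])
end Glue

lemma split_glue {A : Finset ℕ} {p : ℕ → ℕ} {a : ℕ}
    (hp : p ∈ Qset A) (ha : a ∈ A) (ha' : a ≠ fmin A) :
    glueF A (Bof A p (bvert A a p)) (qof A p (bvert A a p)) (sof A p (bvert A a p)) = p := by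
  obtain ⟨hb1, hb2, hb3, -⟩ := bvert_spec hp ha ha'
  set b := bvert A a p with hbdef
  funext n
  by_cases h : n ∈ Bof A p b
  · by_cases h2 : n = fmin (Bof A p b)
    · rw [fmin_Bof hp hb1] at h2
      subst h2
      simp only [glueF, if_pos h, fmin_Bof hp hb1, if_pos rfl]
      exact hb2.symm
    · rw [fmin_Bof hp hb1] at h2
      simp only [glueF, if_pos h, fmin_Bof hp hb1, if_neg h2]
      simp [qof, h, h2]
  · simp only [glueF, if_neg h]
    by_cases hA : n ∈ A
    · simp [sof, hA, h]
    · simp only [sof, hA, false_and, if_false]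
      exact (Q_out hp hA).symm

section GlueInv
variable {A B : Finset ℕ} {q s : ℕ → ℕ} {a : ℕ}

lemma glue_iter_mem_C (hs : s ∈ Qset (A \ B)) {n : ℕ} (hn : n ∈ A) (hn' : n ∉ B) (j : ℕ) :
    (glueF A B q s)^[j] n ∈ A ∧ (glueF A B q s)^[j] n ∉ B := by
  induction j with
  | zero => exact ⟨hn, hn'⟩
  | succ j ih =>
    rw [Function.iterate_succ_apply']
    have : glueF A B q s ((glueF A B q s)^[j] n) = s ((glueF A B q s)^[j] n) := by
      simp [glueF, ih.2]
    rw [this]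
    have := Q_mem hs (Finset.mem_sdiff.2 ⟨ih.1, ih.2⟩)
    exact ⟨(Finset.mem_sdiff.1 this).1, (Finset.mem_sdiff.1 this).2⟩

lemma glue_iter_agree (hq : q ∈ Qset B) {n : ℕ} (hn : n ∈ B) {m : ℕ}
    (hm : ∀ j, j < m → q^[j] n ≠ fmin B) :
    ∀ j, j ≤ m → (glueF A B q s)^[j] n = q^[j] n := by
  intro j hj
  induction j with
  | zero => rfl
  | succ j ih =>
    rw [Function.iterate_succ_apply', Function.iterate_succ_apply',
      ih (Nat.le_of_succ_le hj)]
    have h1 : q^[j] n ∈ B := by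
      clear ih hj
      induction j with
      | zero => simpa
      | succ j ih2 => rw [Function.iterate_succ_apply']; exact Q_mem hq ih2
    have h2 : q^[j] n ≠ fmin B := hm j hj
    simp [glueF, h1, h2]

lemma glue_bvert (hB : B ⊆ A) (haB : a ∈ B) (hrB : fmin A ∉ B)
    (hq : q ∈ Qset B) (hs : s ∈ Qset (A \ B)) :
    bvert A a (glueF A B q s) = fmin B := by
  have hminB : fmin B ∈ B := fmin_mem ⟨a, haB⟩
  have hexq : ∃ m, q^[m] a = fmin B := Q_reach hq haB
  set m₀ := Nat.find hexq with hm₀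
  have hagree : ∀ j, j ≤ m₀ → (glueF A B q s)^[j] a = q^[j] a :=
    glue_iter_agree hq haB (fun j hj => Nat.find_min hexq hj)
  have hg : (glueF A B q s)^[m₀ + 1] a = fmin A := by
    rw [Function.iterate_succ_apply', hagree m₀ le_rfl, Nat.find_spec hexq]
    simp [glueF, hminB]
  have hexg : ∃ k, (glueF A B q s)^[k] a = fmin A := ⟨m₀ + 1, hg⟩
  have hfind : Nat.find hexg = m₀ + 1 := by
    rw [Nat.find_eq_iff]
    refine ⟨hg, fun j hj hbad => ?_⟩
    have hjB : (glueF A B q s)^[j] a ∈ B := by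
      rw [hagree j (Nat.lt_succ_iff.1 hj)]
      clear hbad hj
      induction j with
      | zero => simpa
      | succ j ih => rw [Function.iterate_succ_apply']; exact Q_mem hq ih
    exact hrB (hbad ▸ hjB)
  rw [bvert, dif_pos hexg, hfind, Nat.add_sub_cancel, hagree m₀ le_rfl, Nat.find_spec hexq]

lemma glue_Bof (hB : B ⊆ A) (haB : a ∈ B) (hrB : fmin A ∉ B)
    (hq : q ∈ Qset B) (hs : s ∈ Qset (A \ B)) :
    Bof A (glueF A B q s) (fmin B) = B := by
  have hminB : fmin B ∈ B := fmin_mem ⟨a, haB⟩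
  ext n
  rw [mem_Bof]
  constructor
  · rintro ⟨hnA, k, hk⟩
    by_contra hnB
    exact ((glue_iter_mem_C hs hnA hnB k).2) (hk ▸ hminB)
  · intro hnB
    refine ⟨hB hnB, ?_⟩
    have hexq : ∃ m, q^[m] n = fmin B := Q_reach hq hnB
    exact ⟨Nat.find hexq, by
      rw [glue_iter_agree hq hnB (fun j hj => Nat.find_min hexq hj) _ le_rfl]
      exact Nat.find_spec hexq⟩

lemma glue_qof (hB : B ⊆ A) (haB : a ∈ B) (hrB : fmin A ∉ B)
    (hq : q ∈ Qset B) (hs : s ∈ Qset (A \ B)) :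
    qof A (glueF A B q s) (fmin B) = q := by
  have hBof := glue_Bof (a := a) hB haB hrB hq hs
  funext n
  rw [qof, hBof]
  by_cases h : n ∈ B
  · by_cases h2 : n = fmin B
    · rw [if_neg (by simp [h2]), h2, Q_fix hq]
    · rw [if_pos ⟨h, h2⟩]
      simp [glueF, h, h2]
  · rw [if_neg (by simp [h]), Q_out hq h]

lemma glue_sof (hB : B ⊆ A) (haB : a ∈ B) (hrB : fmin A ∉ B)
    (hq : q ∈ Qset B) (hs : s ∈ Qset (A \ B)) :
    sof A (glueF A B q s) (fmin B) = s := by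
  have hBof := glue_Bof (a := a) hB haB hrB hq hs
  funext n
  rw [sof, hBof]
  by_cases h : n ∈ A ∧ n ∉ B
  · rw [if_pos h]
    simp [glueF, h.2]
  · rw [if_neg h, Q_out hs (by simp [Finset.mem_sdiff]; tauto)]
end GlueInv

lemma extf_iterate {A : Finset ℕ} (p : ↥A → ↥A) (k : ℕ) (u : ↥A) :
    (extf A p)^[k] (u : ℕ) = (p^[k] u : ℕ) := by
  induction k generalizing u with
  | zero => simp
  | succ k ih =>
    rw [Function.iterate_succ_apply, Function.iterate_succ_apply]
    have : extf A p (u : ℕ) = ((p u : ℕ)) := by simp [extf]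
    rw [this, ih]

lemma ThetaA_eq_QW {R : Type*} [CommRing R] (x : ℕ → R) (y : ℕ → ℕ → R) (A : Finset ℕ) :
    ThetaA x y A = ∑ p ∈ Qset A, Wf x y A p := by
  rw [Qset, Finset.sum_image (fun p _ q _ h => extf_injective A h)]
  unfold ThetaA
  refine Finset.sum_congr rfl (fun p _ => ?_)
  unfold Wf
  refine Finset.prod_nbij (fun v => (v : ℕ)) ?_ ?_ ?_ ?_
  · intro v hv
    simp only [Finset.mem_filter, Finset.mem_univ, true_and] at hv
    simp [Finset.mem_sdiff, v.2, hv]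
  · intro v _ w _ h; exact Subtype.ext h
  · intro n hn
    simp only [Finset.coe_sdiff, Set.mem_diff, Finset.coe_singleton, Set.mem_singleton_iff,
      Finset.mem_coe] at hn
    exact ⟨⟨n, hn.1⟩, by simp [hn.2], rfl⟩
  · intro v hv
    simp only [Finset.mem_filter, Finset.mem_univ, true_and] at hv
    have hx : extf A p (v : ℕ) = (p v : ℕ) := by simp [extf]
    rw [hx]
    congr 1
    refine Finset.sum_nbij (fun u => (u : ℕ)) ?_ ?_ ?_ ?_
    · intro u hu
      simp only [Finset.mem_filter, Finset.mem_univ, true_and] at hu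
      obtain ⟨k, hk⟩ := hu
      exact Finset.mem_filter.2 ⟨u.2, k, by rw [extf_iterate, hk]⟩
    · intro u _ w _ h; exact Subtype.ext h
    · intro n hn
      simp only [Finset.coe_filter, Set.mem_setOf_eq, Finset.mem_coe] at hn
      obtain ⟨hnA, k, hk⟩ := hn
      refine ⟨⟨n, hnA⟩, ?_, rfl⟩
      simp only [Finset.mem_coe, Finset.mem_filter, Finset.mem_univ, true_and]
      exact ⟨k, Subtype.ext (by rw [← extf_iterate]; exact hk)⟩
    · intro u _; rfl


open scoped Classical in
/-- Recursion for the hook-sum generating function `Θ_A` (Proposition 3.3):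
for `|A| ≥ 2` and a fixed `a ∈ A ∖ {min A}`,
`Θ_A = ∑_{B ⊔ C = A, min A ∈ C, a ∈ B} x_{min A} (∑_{j∈B} y_{min B, j}) Θ_B Θ_C`. -/
theorem ThetaA_recursion {R : Type*} [CommRing R] (x : ℕ → R) (y : ℕ → ℕ → R)
    (A : Finset ℕ) (hA : 2 ≤ A.card) (hpos : ∀ i ∈ A, 0 < i)
    (a : ℕ) (ha : a ∈ A) (ha' : a ≠ fmin A) :
    ThetaA x y A = ∑ B ∈ A.powerset.filter (fun B => a ∈ B ∧ fmin A ∉ B),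
      x (fmin A) * (∑ j ∈ B, y (fmin B) j) * ThetaA x y B * ThetaA x y (A \ B) := by
  rw [ThetaA_eq_QW]
  have hRHS : ∀ B ∈ A.powerset.filter (fun B => a ∈ B ∧ fmin A ∉ B),
      x (fmin A) * (∑ j ∈ B, y (fmin B) j) * ThetaA x y B * ThetaA x y (A \ B)
      = ∑ t ∈ Qset B ×ˢ Qset (A \ B),
          x (fmin A) * (∑ j ∈ B, y (fmin B) j) * Wf x y B t.1 * Wf x y (A \ B) t.2 := by
    intro B _
    rw [ThetaA_eq_QW, ThetaA_eq_QW, Finset.sum_product]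
    simp only [← Finset.sum_mul, ← Finset.mul_sum]
  rw [Finset.sum_congr rfl hRHS, Finset.sum_sigma']
  refine Finset.sum_bij'
    (fun p _ => (⟨Bof A p (bvert A a p), (qof A p (bvert A a p), sof A p (bvert A a p))⟩ :
      Σ _ : Finset ℕ, (ℕ → ℕ) × (ℕ → ℕ)))
    (fun t _ => glueF A t.1 t.2.1 t.2.2) ?_ ?_ ?_ ?_ ?_
  · -- hi
    intro p hp
    obtain ⟨hb1, hb2, hb3, k, hb4⟩ := bvert_spec hp ha ha'
    rw [Finset.mem_sigma, Finset.mem_filter, Finset.mem_powerset, Finset.mem_product]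
    exact ⟨⟨Finset.filter_subset _ _, mem_Bof.2 ⟨ha, k, hb4⟩, fmin_not_mem_Bof hp hb3⟩,
      qof_mem_Qset hp hb1 hb3, sof_mem_Qset hp hb1 hb3⟩
  · -- hj
    intro t ht
    rw [Finset.mem_sigma, Finset.mem_filter, Finset.mem_powerset, Finset.mem_product] at ht
    obtain ⟨⟨hB, haB, hrB⟩, hq, hs⟩ := ht
    exact glue_mem_Qset hB haB hrB hq hs
  · -- left_inv
    intro p hp
    exact split_glue hp ha ha'
  · -- right_inv
    intro t ht
    rw [Finset.mem_sigma, Finset.mem_filter, Finset.mem_powerset, Finset.mem_product] at ht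
    obtain ⟨⟨hB, haB, hrB⟩, hq, hs⟩ := ht
    have h1 := glue_bvert (a := a) hB haB hrB hq hs
    have h2 := glue_Bof (a := a) hB haB hrB hq hs
    have h3 := glue_qof (a := a) hB haB hrB hq hs
    have h4 := glue_sof (a := a) hB haB hrB hq hs
    beta_reduce
    rw [h1, h2, h3, h4]
  · -- weights
    intro p hp
    obtain ⟨hb1, hb2, hb3, -⟩ := bvert_spec hp ha ha'
    exact weight_split x y hp hb1 hb2 hb3
end
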